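/- arXiv:1711.03064 — 7 statements merged into one kernel-verified Lean document; each statement's English description precedes it below -/
import Mathlib

section
/- Let C be a 2p×2p complex matrix that is positive definite and J-unitary with respect to j = diag(I_p, -I_p), i.e. C > 0 and C j C = j. Then C admits a representation C = D·F where F = [[I_p, ρ],[ρ*, I_p]], D = diag((I_p - ρρ*)^{-1/2}, (I_p - ρ*ρ)^{-1/2}), for some p×p matrix ρ with ρ*ρ < I_p (operator norm of ρ strictly less than 1). -/
open Matrix
open scoped ComplexOrder

noncomputable section

/-- The 2p×2p signature matrix j = diag(I_p, -I_p). -/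
def jmat (p : ℕ) : Matrix (Fin p ⊕ Fin p) (Fin p ⊕ Fin p) ℂ :=
  Matrix.fromBlocks 1 0 0 (-1)

lemma my_sq_posDef {n : Type*} [Fintype n] [DecidableEq n] {M : Matrix n n ℂ}
    (hM : M.PosDef) : (M * M).PosDef := by
  refine posDef_iff_dotProduct_mulVec.mpr ⟨by simp [Matrix.IsHermitian, conjTranspose_mul, hM.1.eq], fun x hx => ?_⟩
  have hy : M *ᵥ x ≠ 0 := by
    intro h
    exact hx ((Matrix.mulVec_injective_iff_isUnit.mpr hM.isUnit) (by simp [h]))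
  have h : M * M = Mᴴ * M := by rw [hM.1.eq]
  rw [h, ← mulVec_mulVec, dotProduct_mulVec, vecMul_conjTranspose, star_star]
  exact Matrix.dotProduct_star_self_pos_iff.mpr hy

lemma my_block_posDef {n : Type*} [Fintype n] [DecidableEq n]
    {C : Matrix (n ⊕ n) (n ⊕ n) ℂ} (hC : C.PosDef) :
    C.toBlocks₁₁.PosDef ∧ C.toBlocks₂₂.PosDef := by
  constructor
  · refine posDef_iff_dotProduct_mulVec.mpr ⟨?_, fun x hx => ?_⟩
    · ext i k
      exact congrFun (congrFun hC.1 (Sum.inl i)) (Sum.inl k)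
    · have hy : (Sum.elim x 0 : n ⊕ n → ℂ) ≠ 0 := by
        intro h
        exact hx (funext fun i => congrFun h (Sum.inl i))
      have := hC.dotProduct_mulVec_pos hy
      simpa [Matrix.mulVec, dotProduct, Fintype.sum_sum_type, toBlocks₁₁] using this
  · refine posDef_iff_dotProduct_mulVec.mpr ⟨?_, fun x hx => ?_⟩
    · ext i k
      exact congrFun (congrFun hC.1 (Sum.inr i)) (Sum.inr k)
    · have hy : (Sum.elim 0 x : n ⊕ n → ℂ) ≠ 0 := by
        intro h
        exact hx (funext fun i => congrFun h (Sum.inr i))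
      have := hC.dotProduct_mulVec_pos hy
      simpa [Matrix.mulVec, dotProduct, Fintype.sum_sum_type, toBlocks₂₂] using this

/-- a positive definite j-unitary matrix C admits the Halmos-type
representation C = D·F with F = [[I, ρ],[ρ*, I]],
D = diag((I - ρρ*)^{-1/2}, (I - ρ*ρ)^{-1/2}) for some ρ with ρ*ρ < I. -/
theorem posdef_junitary_halmos_representation (p : ℕ) (hp : 0 < p)
    (C : Matrix (Fin p ⊕ Fin p) (Fin p ⊕ Fin p) ℂ)
    (hC : C.PosDef) (hCjC : C * jmat p * C = jmat p) :
    ∃ (ρ d₁ d₂ : Matrix (Fin p) (Fin p) ℂ),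
      (1 - ρᴴ * ρ).PosDef ∧
      d₁.PosDef ∧ d₂.PosDef ∧
      d₁ * d₁ = (1 - ρ * ρᴴ)⁻¹ ∧
      d₂ * d₂ = (1 - ρᴴ * ρ)⁻¹ ∧
      C = Matrix.fromBlocks d₁ 0 0 d₂ * Matrix.fromBlocks 1 ρ ρᴴ 1 := by
  set A := C.toBlocks₁₁ with hA
  set B := C.toBlocks₁₂ with hB
  set E := C.toBlocks₂₂ with hE
  have hApos : A.PosDef := (my_block_posDef hC).1
  have hEpos : E.PosDef := (my_block_posDef hC).2
  have hB'B : C.toBlocks₂₁ = Bᴴ := by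
    ext i k
    exact (congrFun (congrFun hC.1 (Sum.inr i)) (Sum.inl k)).symm
  have hCblocks : C = Matrix.fromBlocks A B Bᴴ E := by
    rw [← hB'B]; exact (Matrix.fromBlocks_toBlocks C).symm
  -- invertibility
  have hAd : IsUnit A.det := (Matrix.isUnit_iff_isUnit_det A).mp hApos.isUnit
  have hEd : IsUnit E.det := (Matrix.isUnit_iff_isUnit_det E).mp hEpos.isUnit
  have hAi1 : A * A⁻¹ = 1 := Matrix.mul_nonsing_inv A hAd
  have hAi2 : A⁻¹ * A = 1 := Matrix.nonsing_inv_mul A hAd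
  have hEi1 : E * E⁻¹ = 1 := Matrix.mul_nonsing_inv E hEd
  have hEi2 : E⁻¹ * E = 1 := Matrix.nonsing_inv_mul E hEd
  -- block equations from hCjC
  rw [hCblocks] at hCjC
  unfold jmat at hCjC
  rw [Matrix.fromBlocks_multiply, Matrix.fromBlocks_multiply] at hCjC
  have e11 : A * A - B * Bᴴ = 1 := by
    have := congrArg Matrix.toBlocks₁₁ hCjC
    simp only [Matrix.toBlocks_fromBlocks₁₁, mul_one, mul_zero, zero_mul, mul_neg,
      add_zero, zero_add, neg_mul, one_mul] at this
    rw [← this]; abel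
  have e12 : A * B = B * E := by
    have := congrArg Matrix.toBlocks₁₂ hCjC
    simp only [Matrix.toBlocks_fromBlocks₁₂, mul_one, mul_zero, zero_mul, mul_neg,
      add_zero, zero_add, neg_mul, one_mul] at this
    rw [← sub_eq_zero]; rw [← this]; abel
  have e21 : Bᴴ * A = E * Bᴴ := by
    have := congrArg Matrix.toBlocks₂₁ hCjC
    simp only [Matrix.toBlocks_fromBlocks₂₁, mul_one, mul_zero, zero_mul, mul_neg,
      add_zero, zero_add, neg_mul, one_mul] at this
    rw [← sub_eq_zero]; rw [← this]; abel
  have e22 : E * E - Bᴴ * B = 1 := by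
    have := congrArg Matrix.toBlocks₂₂ hCjC
    simp only [Matrix.toBlocks_fromBlocks₂₂, mul_one, mul_zero, zero_mul, mul_neg,
      add_zero, zero_add, neg_mul, one_mul] at this
    have h2 : Bᴴ * B - E * E = -1 := by rw [← this]; abel
    calc E * E - Bᴴ * B = -(Bᴴ * B - E * E) := (neg_sub _ _).symm
    _ = 1 := by rw [h2]; norm_num
  -- define rho
  set ρ : Matrix (Fin p) (Fin p) ℂ := A⁻¹ * B with hrho
  have hrH : ρᴴ = Bᴴ * A⁻¹ := by
    rw [hrho, conjTranspose_mul, Matrix.conjTranspose_nonsing_inv, hApos.1.eq]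
  have hAr : A * ρ = B := by rw [hrho, ← mul_assoc, hAi1, one_mul]
  have hErH : E * ρᴴ = Bᴴ := by
    rw [hrH, ← mul_assoc, ← e21, mul_assoc, hAi1, mul_one]
  have hrE : ρ * E = B := by
    rw [hrho, mul_assoc, ← e12, ← mul_assoc, hAi2, one_mul]
  have hralt : ρ = B * E⁻¹ := by
    rw [← hrE, mul_assoc, hEi1, mul_one]
  have hrHalt : ρᴴ = E⁻¹ * Bᴴ := by
    rw [hralt, conjTranspose_mul, Matrix.conjTranspose_nonsing_inv, hEpos.1.eq]
  -- key identities
  have hBBH : B * Bᴴ = A * A - 1 := by rw [← e11]; abel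
  have hBHB : Bᴴ * B = E * E - 1 := by rw [← e22]; abel
  have key1 : 1 - ρ * ρᴴ = A⁻¹ * A⁻¹ := by
    rw [hrho, hrH, mul_assoc, ← mul_assoc B, hBBH]
    rw [Matrix.sub_mul, Matrix.mul_sub, one_mul]
    simp [mul_assoc, hAi1, hAi2]
  have key2 : 1 - ρᴴ * ρ = E⁻¹ * E⁻¹ := by
    rw [hrHalt, hralt, mul_assoc, ← mul_assoc Bᴴ, hBHB]
    rw [Matrix.sub_mul, Matrix.mul_sub, one_mul]
    simp [mul_assoc, hEi1, hEi2]
  refine ⟨ρ, A, E, ?_, hApos, hEpos, ?_, ?_, ?_⟩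
  · rw [key2]
    exact my_sq_posDef hEpos.inv
  · rw [key1, Matrix.mul_inv_rev, Matrix.nonsing_inv_nonsing_inv A hAd]
  · rw [key2, Matrix.mul_inv_rev, Matrix.nonsing_inv_nonsing_inv E hEd]
  · rw [hCblocks, Matrix.fromBlocks_multiply]
    simp [hAr, hErH]
end
end

section
/- Let C be a 2p×2p positive definite j-unitary matrix (C > 0, C j C = j, with j = diag(I_p, -I_p)), partitioned into p×p blocks C = [[c11,c12],[c21,c22]]. Then c11 is invertible and the matrix ρ = c11^{-1} c12 is the unique matrix satisfying the Halmos extension representation C = D·F with F = [[I_p,ρ],[ρ*,I_p]] and D = diag((I_p-ρρ*)^{-1/2},(I_p-ρ*ρ)^{-1/2}). -/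
open Matrix
open scoped ComplexOrder

noncomputable section

section helpers

variable {m n : Type*} [Fintype m] [Fintype n] [DecidableEq m] [DecidableEq n]

lemma posDef_mul_self {A : Matrix n n ℂ} (hA : A.PosDef) : (A * A).PosDef := by
  refine Matrix.PosDef.of_dotProduct_mulVec_pos ?_ (fun x hx => ?_)
  · show (A * A)ᴴ = A * A
    rw [conjTranspose_mul, hA.isHermitian.eq]
  · have hinj : Function.Injective (A.mulVec) :=
      Matrix.mulVec_injective_iff_isUnit.mpr hA.isUnit
    have hAx : A *ᵥ x ≠ 0 := fun h => hx (hinj (h.trans (Matrix.mulVec_zero A).symm))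
    have key : star x ⬝ᵥ (A * A) *ᵥ x = star (A *ᵥ x) ⬝ᵥ (A *ᵥ x) := by
      rw [star_mulVec, ← Matrix.dotProduct_mulVec, Matrix.mulVec_mulVec, hA.isHermitian.eq]
    rw [key]
    exact Matrix.dotProduct_star_self_pos_iff.mpr hAx

lemma posDef_toBlocks₁₁ {M : Matrix (m ⊕ n) (m ⊕ n) ℂ} (hM : M.PosDef) :
    M.toBlocks₁₁.PosDef := by
  refine Matrix.PosDef.of_dotProduct_mulVec_pos ?_ (fun x hx => ?_)
  · ext i j
    simpa [Matrix.toBlocks₁₁, Matrix.conjTranspose_apply] using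
      congrFun (congrFun hM.isHermitian (Sum.inl i)) (Sum.inl j)
  · have hy : (Sum.elim x 0 : m ⊕ n → ℂ) ≠ 0 := fun h =>
      hx (funext fun i => congrFun h (Sum.inl i))
    have := hM.dotProduct_mulVec_pos hy
    convert this using 1
    simp [dotProduct, Matrix.mulVec, Fintype.sum_sum_type, Matrix.toBlocks₁₁]

lemma posDef_toBlocks₂₂ {M : Matrix (m ⊕ n) (m ⊕ n) ℂ} (hM : M.PosDef) :
    M.toBlocks₂₂.PosDef := by
  refine Matrix.PosDef.of_dotProduct_mulVec_pos ?_ (fun x hx => ?_)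
  · ext i j
    simpa [Matrix.toBlocks₂₂, Matrix.conjTranspose_apply] using
      congrFun (congrFun hM.isHermitian (Sum.inr i)) (Sum.inr j)
  · have hy : (Sum.elim 0 x : m ⊕ n → ℂ) ≠ 0 := fun h =>
      hx (funext fun i => congrFun h (Sum.inr i))
    have := hM.dotProduct_mulVec_pos hy
    convert this using 1
    simp [dotProduct, Matrix.mulVec, Fintype.sum_sum_type, Matrix.toBlocks₂₂]

end helpers

/-- for a positive definite j-unitary C = [[c11,c12],[c21,c22]],
the block c11 is invertible and ρ = c11⁻¹ c12 is the unique matrix realizing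
the Halmos extension representation C = D·F. -/
theorem halmos_coefficient_unique (p : ℕ)
    (C : Matrix (Fin p ⊕ Fin p) (Fin p ⊕ Fin p) ℂ)
    (hC : C.PosDef) (hCjC : C * jmat p * C = jmat p) :
    IsUnit C.toBlocks₁₁ ∧
    (∃ d₁ d₂ : Matrix (Fin p) (Fin p) ℂ,
      (1 - (C.toBlocks₁₁⁻¹ * C.toBlocks₁₂)ᴴ * (C.toBlocks₁₁⁻¹ * C.toBlocks₁₂)).PosDef ∧
      d₁.PosDef ∧ d₂.PosDef ∧
      d₁ * d₁ = (1 - (C.toBlocks₁₁⁻¹ * C.toBlocks₁₂) * (C.toBlocks₁₁⁻¹ * C.toBlocks₁₂)ᴴ)⁻¹ ∧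
      d₂ * d₂ = (1 - (C.toBlocks₁₁⁻¹ * C.toBlocks₁₂)ᴴ * (C.toBlocks₁₁⁻¹ * C.toBlocks₁₂))⁻¹ ∧
      C = Matrix.fromBlocks d₁ 0 0 d₂ *
        Matrix.fromBlocks 1 (C.toBlocks₁₁⁻¹ * C.toBlocks₁₂) (C.toBlocks₁₁⁻¹ * C.toBlocks₁₂)ᴴ 1) ∧
    (∀ ρ d₁ d₂ : Matrix (Fin p) (Fin p) ℂ,
      (1 - ρᴴ * ρ).PosDef → d₁.PosDef → d₂.PosDef →
      d₁ * d₁ = (1 - ρ * ρᴴ)⁻¹ → d₂ * d₂ = (1 - ρᴴ * ρ)⁻¹ →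
      C = Matrix.fromBlocks d₁ 0 0 d₂ * Matrix.fromBlocks 1 ρ ρᴴ 1 →
      ρ = C.toBlocks₁₁⁻¹ * C.toBlocks₁₂) := by
  classical
  set a := C.toBlocks₁₁ with ha_def
  set b := C.toBlocks₁₂ with hb_def
  have ha : a.PosDef := posDef_toBlocks₁₁ hC
  have hd : C.toBlocks₂₂.PosDef := posDef_toBlocks₂₂ hC
  set d := C.toBlocks₂₂ with hd_def
  have haU : IsUnit a := ha.isUnit
  have hdU : IsUnit d := hd.isUnit
  have haD : IsUnit a.det := (Matrix.isUnit_iff_isUnit_det a).mp haU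
  have hdD : IsUnit d.det := (Matrix.isUnit_iff_isUnit_det d).mp hdU
  -- C = fromBlocks a b bᴴ d
  have hc : C.toBlocks₂₁ = bᴴ := by
    ext i j
    simpa [hb_def, Matrix.toBlocks₂₁, Matrix.toBlocks₁₂, Matrix.conjTranspose_apply] using
      (congrFun (congrFun hC.isHermitian (Sum.inr i)) (Sum.inl j)).symm
  have hC' : C = Matrix.fromBlocks a b bᴴ d := by
    rw [ha_def, hb_def, hd_def, ← hc, Matrix.fromBlocks_toBlocks]
  -- block equations from CjC = j
  have hprod : Matrix.fromBlocks a b bᴴ d * jmat p * Matrix.fromBlocks a b bᴴ d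
      = Matrix.fromBlocks (a * a - b * bᴴ) (a * b - b * d) (bᴴ * a - d * bᴴ)
        (bᴴ * b - d * d) := by
    rw [jmat, Matrix.fromBlocks_multiply, Matrix.fromBlocks_multiply, Matrix.fromBlocks_inj]
    refine ⟨?_, ?_, ?_, ?_⟩ <;> noncomm_ring
  have hblocks : Matrix.fromBlocks (a * a - b * bᴴ) (a * b - b * d) (bᴴ * a - d * bᴴ)
      (bᴴ * b - d * d) = Matrix.fromBlocks (1 : Matrix (Fin p) (Fin p) ℂ) 0 0 (-1) := by
    rw [← hprod, ← hC']
    exact hCjC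
  have h1 : a * a - b * bᴴ = 1 := by
    simpa using congrArg Matrix.toBlocks₁₁ hblocks
  have h2 : a * b - b * d = 0 := by
    simpa using congrArg Matrix.toBlocks₁₂ hblocks
  have h3 : bᴴ * b - d * d = -1 := by
    simpa using congrArg Matrix.toBlocks₂₂ hblocks
  have h2' : a * b = b * d := by rwa [sub_eq_zero] at h2
  have h3' : d * d - bᴴ * b = 1 := by
    have := congrArg Neg.neg h3; simpa [neg_sub] using this
  -- basic inverse facts
  have hainv : a⁻¹ * a = 1 := Matrix.nonsing_inv_mul a haD
  have hainv' : a * a⁻¹ = 1 := Matrix.mul_nonsing_inv a haD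
  have hdinv : d⁻¹ * d = 1 := Matrix.nonsing_inv_mul d hdD
  have hdinv' : d * d⁻¹ = 1 := Matrix.mul_nonsing_inv d hdD
  have haH : a⁻¹ᴴ = a⁻¹ := by
    rw [Matrix.conjTranspose_nonsing_inv, ha.isHermitian.eq]
  have hdH : d⁻¹ᴴ = d⁻¹ := by
    rw [Matrix.conjTranspose_nonsing_inv, hd.isHermitian.eq]
  set ρ : Matrix (Fin p) (Fin p) ℂ := a⁻¹ * b with hρ_def
  have e2 : a * ρ = b := by
    rw [hρ_def, ← Matrix.mul_assoc, hainv', Matrix.one_mul]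
  have e1 : a * (b * d⁻¹) = b := by
    rw [← Matrix.mul_assoc, h2', Matrix.mul_assoc, hdinv', Matrix.mul_one]
  have hρ' : ρ = b * d⁻¹ := by
    have h := congrArg (fun X => a⁻¹ * X) (e2.trans e1.symm)
    simpa only [← Matrix.mul_assoc, hainv, Matrix.one_mul] using h
  have hρH : ρᴴ = d⁻¹ * bᴴ := by rw [hρ', Matrix.conjTranspose_mul, hdH]
  have e3 : d * ρᴴ = bᴴ := by rw [hρH, ← Matrix.mul_assoc, hdinv', Matrix.one_mul]
  have hbb : b * bᴴ = a * a - 1 := by rw [← h1]; noncomm_ring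
  have hbb' : bᴴ * b = d * d - 1 := by rw [← h3']; noncomm_ring
  have hrr : 1 - ρ * ρᴴ = a⁻¹ * a⁻¹ := by
    have hmid : ρ * ρᴴ = a⁻¹ * (b * bᴴ) * a⁻¹ := by
      rw [hρ_def, Matrix.conjTranspose_mul, haH]; noncomm_ring
    have hcalc : a⁻¹ * (a * a - 1) * a⁻¹ = 1 - a⁻¹ * a⁻¹ := by
      rw [mul_sub, mul_one, sub_mul, ← Matrix.mul_assoc a⁻¹ a a, hainv, Matrix.one_mul, hainv']
    rw [hmid, hbb, hcalc, sub_sub_cancel]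
  have hss : 1 - ρᴴ * ρ = d⁻¹ * d⁻¹ := by
    have hmid : ρᴴ * ρ = d⁻¹ * (bᴴ * b) * d⁻¹ := by
      rw [hρH, hρ']; noncomm_ring
    have hcalc : d⁻¹ * (d * d - 1) * d⁻¹ = 1 - d⁻¹ * d⁻¹ := by
      rw [mul_sub, mul_one, sub_mul, ← Matrix.mul_assoc d⁻¹ d d, hdinv, Matrix.one_mul, hdinv']
    rw [hmid, hbb', hcalc, sub_sub_cancel]
  have hssPD : (1 - ρᴴ * ρ).PosDef := by rw [hss]; exact posDef_mul_self hd.inv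
  have haa : a * a = (1 - ρ * ρᴴ)⁻¹ := by
    rw [hrr, Matrix.mul_inv_rev, Matrix.nonsing_inv_nonsing_inv a haD]
  have hdd : d * d = (1 - ρᴴ * ρ)⁻¹ := by
    rw [hss, Matrix.mul_inv_rev, Matrix.nonsing_inv_nonsing_inv d hdD]
  have hfact : C = Matrix.fromBlocks a 0 0 d * Matrix.fromBlocks 1 ρ ρᴴ 1 := by
    have hrhs : Matrix.fromBlocks a 0 0 d * Matrix.fromBlocks 1 ρ ρᴴ 1
        = Matrix.fromBlocks a (a * ρ) (d * ρᴴ) d := by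
      rw [Matrix.fromBlocks_multiply]; simp
    rw [hC', hrhs, e2, e3]
  refine ⟨haU, ⟨a, d, hssPD, ha, hd, haa, hdd, hfact⟩, ?_⟩
  intro ρ' e₁ e₂ hpd' he₁ he₂ hee₁ hee₂ heq
  have hrhs : Matrix.fromBlocks e₁ 0 0 e₂ * Matrix.fromBlocks 1 ρ' ρ'ᴴ 1
      = Matrix.fromBlocks e₁ (e₁ * ρ') (e₂ * ρ'ᴴ) e₂ := by
    rw [Matrix.fromBlocks_multiply]; simp
  rw [hrhs] at heq
  have h11 : a = e₁ := by
    have := congrArg Matrix.toBlocks₁₁ heq; simpa [← ha_def] using this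
  have h12 : b = e₁ * ρ' := by
    have := congrArg Matrix.toBlocks₁₂ heq; simpa [← hb_def] using this
  have hfin : ρ = ρ' := by
    rw [hρ_def, h11, h12, ← Matrix.mul_assoc,
      Matrix.nonsing_inv_mul e₁ ((Matrix.isUnit_iff_isUnit_det e₁).mp he₁.isUnit),
      Matrix.one_mul]
  exact hfin.symm
end
end

section
/- Let S be an n×n block matrix with p×p blocks, S = {s_{j-i}}_{i,j=1}^n, a self-adjoint block Toeplitz matrix (s_{-k} = s_k*). Define A = {a_{j-i}}_{i,j=0}^{n-1} with a_k = 0 for k>0, a_0 = (i/2)I_p, a_k = i·I_p for k<0, Φ1 the np×p block column of identities I_p, Φ2 the block column with r-th block s_0/2 + s_{-1} + ... + s_{1-r} (plus i·Φ1·ν for a self-adjoint p×p matrix ν), Π = [Φ1, Φ2], and J = [[0,I_p],[I_p,0]]. Then the identity A S - S A* = i Π J Π* holds. -/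
open Matrix
open scoped ComplexOrder

noncomputable section

/-- The 2p×2p matrix J = [[0, I_p],[I_p, 0]]. -/
def Jmat (p : ℕ) : Matrix (Fin p ⊕ Fin p) (Fin p ⊕ Fin p) ℂ :=
  Matrix.fromBlocks 0 1 1 0

/-- The block coefficients a_k of the matrix A:
a_k = 0 for k > 0, a_0 = (i/2)I_p, a_k = i I_p for k < 0. -/
def acoef (p : ℕ) (k : ℤ) : Matrix (Fin p) (Fin p) ℂ :=
  if 0 < k then 0 else if k = 0 then (Complex.I / 2) • 1 else Complex.I • 1

private def cA (k : ℤ) : ℂ := if 0 < k then 0 else if k = 0 then Complex.I / 2 else Complex.I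

private lemma acoef_eq (p : ℕ) (k : ℤ) : acoef p k = cA k • (1 : Matrix (Fin p) (Fin p) ℂ) := by
  unfold acoef cA; split_ifs <;> simp

private lemma key_sum (F : ℤ → ℂ) (i j : ℕ) :
    ∑ k ∈ Finset.range (i+1), F ((j:ℤ) - k) + ∑ k ∈ Finset.range j, F ((k:ℤ) - i)
      = ∑ l ∈ Finset.range (i+1), F (-(l:ℤ)) + ∑ l ∈ Finset.range j, F ((l:ℤ)+1) := by
  induction j with
  | zero => simp [zero_sub]
  | succ j ih =>
    rw [Finset.sum_range_succ (fun k => F ((k:ℤ) - i)) j,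
        Finset.sum_range_succ (fun l => F ((l:ℤ)+1)) j]
    have h1 : ∑ k ∈ Finset.range (i+1), F (((j+1 : ℕ):ℤ) - k)
        = F ((j:ℤ)+1) + (∑ k ∈ Finset.range i, F ((j:ℤ) - k)) := by
      rw [Finset.sum_range_succ' (fun k => F (((j+1 : ℕ):ℤ) - k)) i]
      push_cast
      rw [add_comm]
      congr 1
      · norm_num
    have h2 : ∑ k ∈ Finset.range (i+1), F ((j:ℤ) - k)
        = ∑ k ∈ Finset.range i, F ((j:ℤ) - k) + F ((j:ℤ) - i) := Finset.sum_range_succ _ i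
    rw [h2] at ih
    push_cast at h1 ⊢
    rw [h1]
    linear_combination ih

private lemma outer_sum {n : ℕ} (i : Fin n) (w : ℤ → ℂ) (hw : ∀ k : ℤ, 0 < k → w k = 0)
    (g : ℕ → ℂ) :
    ∑ k ∈ Finset.range n, w ((k:ℤ) - (i:ℤ)) * g k
      = w 0 * g i + ∑ k ∈ Finset.range (i:ℕ), w ((k:ℤ) - (i:ℤ)) * g k := by
  have hsub : Finset.range ((i:ℕ)+1) ⊆ Finset.range n := Finset.range_subset_range.mpr i.isLt
  rw [← Finset.sum_subset hsub (fun x _ hx => by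
    rw [hw ((x:ℤ) - i) (by simp only [Finset.mem_range] at hx ⊢; omega), zero_mul])]
  rw [Finset.sum_range_succ, add_comm]
  norm_num

/-- the operator identity A S - S A* = i Π J Π* for a self-adjoint
block Toeplitz matrix S = {s_{j-i}}. -/
theorem toeplitz_operator_identity (n p : ℕ)
    (s : ℤ → Matrix (Fin p) (Fin p) ℂ)
    (hs : ∀ k : ℤ, s (-k) = (s k)ᴴ)
    (ν : Matrix (Fin p) (Fin p) ℂ) (hν : νᴴ = ν)
    (S A : Matrix (Fin n × Fin p) (Fin n × Fin p) ℂ)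
    (hS : ∀ i j : Fin n, ∀ a b : Fin p, S (i, a) (j, b) = s ((j : ℤ) - (i : ℤ)) a b)
    (hA : ∀ i j : Fin n, ∀ a b : Fin p, A (i, a) (j, b) = acoef p ((j : ℤ) - (i : ℤ)) a b)
    (Φ₁ Φ₂ : Matrix (Fin n × Fin p) (Fin p) ℂ)
    (hΦ₁ : ∀ i : Fin n, ∀ a b : Fin p, Φ₁ (i, a) b = (1 : Matrix (Fin p) (Fin p) ℂ) a b)
    (hΦ₂ : ∀ i : Fin n, ∀ a b : Fin p, Φ₂ (i, a) b =
      ((2 : ℂ)⁻¹ • s 0 + ∑ l ∈ Finset.range (i : ℕ), s (-((l : ℤ) + 1))) a b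
        + (Complex.I • (Φ₁ * ν)) (i, a) b)
    (Pmat : Matrix (Fin n × Fin p) (Fin p ⊕ Fin p) ℂ)
    (hPmat : Pmat = Matrix.fromCols Φ₁ Φ₂) :
    A * S - S * Aᴴ = Complex.I • (Pmat * Jmat p * Pmatᴴ) := by
  have hR : Pmat * Jmat p * Pmatᴴ = Φ₂ * Φ₁ᴴ + Φ₁ * Φ₂ᴴ := by
    subst hPmat
    rw [Jmat, fromCols_mul_fromBlocks,
      conjTranspose_fromCols_eq_fromRows_conjTranspose, fromCols_mul_fromRows]
    simp [add_comm]
  rw [hR]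
  -- entrywise conjugate facts
  have hconj : ∀ (m : ℤ) (a b : Fin p), (starRingEnd ℂ) (s m b a) = s (-m) a b := by
    intro m a b; rw [hs m]; rfl
  have hνc : ∀ a b : Fin p, (starRingEnd ℂ) (ν b a) = ν a b := by
    intro a b; conv_rhs => rw [← hν]
    rw [conjTranspose_apply, RCLike.star_def]
  -- simplified Φ₂ entries
  have hΦ₂' : ∀ (i : Fin n) (a b : Fin p), Φ₂ (i, a) b =
      (2:ℂ)⁻¹ * s 0 a b + (∑ l ∈ Finset.range (i:ℕ), s (-((l:ℤ)+1)) a b)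
        + Complex.I * ν a b := by
    intro i a b
    rw [hΦ₂, Matrix.add_apply, Matrix.smul_apply, Matrix.sum_apply,
      Matrix.smul_apply, Matrix.mul_apply]
    simp [hΦ₁, Matrix.one_apply, ite_mul, smul_eq_mul]
  ext ⟨i, a⟩ ⟨j, b⟩
  have hAS : (A * S) (i, a) (j, b)
      = cA 0 * s ((j:ℤ) - i) a b
        + ∑ k ∈ Finset.range (i:ℕ), cA ((k:ℤ) - i) * s ((j:ℤ) - k) a b := by
    rw [mul_apply, Fintype.sum_prod_type]
    have hinner : ∀ x : Fin n, ∑ c : Fin p, A (i, a) (x, c) * S (x, c) (j, b)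
        = cA ((x:ℤ) - i) * s ((j:ℤ) - x) a b := by
      intro x
      simp [hA, hS, acoef_eq, Matrix.smul_apply, Matrix.one_apply, smul_eq_mul,
        ite_mul, mul_ite]
    rw [Finset.sum_congr rfl (fun x _ => hinner x),
      Fin.sum_univ_eq_sum_range (fun x => cA ((x:ℤ) - i) * s ((j:ℤ) - x) a b) n,
      outer_sum i cA (fun k hk => by unfold cA; rw [if_pos hk]) ]
  have hSA : (S * Aᴴ) (i, a) (j, b)
      = (starRingEnd ℂ) (cA 0) * s ((j:ℤ) - i) a b
        + ∑ k ∈ Finset.range (j:ℕ), (starRingEnd ℂ) (cA ((k:ℤ) - j)) * s ((k:ℤ) - i) a b := by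
    rw [mul_apply, Fintype.sum_prod_type]
    have hinner : ∀ x : Fin n, ∑ c : Fin p, S (i, a) (x, c) * Aᴴ (x, c) (j, b)
        = (starRingEnd ℂ) (cA ((x:ℤ) - j)) * s ((x:ℤ) - i) a b := by
      intro x
      simp [conjTranspose_apply, hA, hS, acoef_eq, Matrix.smul_apply, Matrix.one_apply,
        smul_eq_mul, ite_mul, mul_ite, apply_ite (starRingEnd ℂ), mul_comm]
    rw [Finset.sum_congr rfl (fun x _ => hinner x),
      Fin.sum_univ_eq_sum_range
        (fun x => (starRingEnd ℂ) (cA ((x:ℤ) - j)) * s ((x:ℤ) - i) a b) n,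
      outer_sum j (fun k => (starRingEnd ℂ) (cA k))
        (fun k hk => by simp [cA, if_pos hk]) ]
  have hRHS : (Φ₂ * Φ₁ᴴ + Φ₁ * Φ₂ᴴ) (i, a) (j, b)
      = Φ₂ (i, a) b + (starRingEnd ℂ) (Φ₂ (j, b) a) := by
    simp [Matrix.add_apply, Matrix.mul_apply, conjTranspose_apply, hΦ₁, Matrix.one_apply,
      ite_mul, mul_ite, apply_ite (starRingEnd ℂ)]
  rw [Matrix.sub_apply, hAS, hSA, Matrix.smul_apply, hRHS, hΦ₂' i a b, hΦ₂' j b a]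
  -- push conjugation through
  simp only [map_add, _root_.map_mul, map_sum, neg_zero, neg_neg, hconj, hνc, Complex.conj_I, map_inv₀, Complex.conj_ofNat,
    map_ofNat, neg_mul]
  -- now reduce cA values and sums
  have hcA0 : cA 0 = Complex.I / 2 := by unfold cA; norm_num
  have hcAneg : ∀ k : ℤ, k < 0 → cA k = Complex.I := by
    intro k hk; unfold cA; rw [if_neg (by omega), if_neg (by omega)]
  have h1 : ∑ k ∈ Finset.range (i:ℕ), cA ((k:ℤ) - i) * s ((j:ℤ) - k) a b
      = Complex.I * ∑ k ∈ Finset.range (i:ℕ), s ((j:ℤ) - k) a b := by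
    rw [Finset.mul_sum]
    refine Finset.sum_congr rfl fun k hk => ?_
    rw [hcAneg _ (by simp only [Finset.mem_range] at hk; omega)]
  have h2 : ∑ k ∈ Finset.range (j:ℕ), (starRingEnd ℂ) (cA ((k:ℤ) - j)) * s ((k:ℤ) - i) a b
      = -Complex.I * ∑ k ∈ Finset.range (j:ℕ), s ((k:ℤ) - i) a b := by
    rw [Finset.mul_sum]
    refine Finset.sum_congr rfl fun k hk => ?_
    rw [hcAneg _ (by simp only [Finset.mem_range] at hk; omega), Complex.conj_I]
  rw [h1, h2, hcA0]
  have K := key_sum (fun m => s m a b) (i:ℕ) (j:ℕ)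
  rw [Finset.sum_range_succ] at K
  rw [Finset.sum_range_succ' (fun l => s (-(l:ℤ)) a b) (i:ℕ)] at K
  push_cast at K
  rw [neg_zero] at K
  simp only [smul_eq_mul, map_div₀, Complex.conj_I, Complex.conj_ofNat]
  linear_combination Complex.I * K
end
end

section
/- Let H(n) = {H_{i+j-2}}_{i,j=1}^n be a self-adjoint n×n block Hankel matrix with p×p blocks (H_k = H_k*). Let A be the block lower shift matrix (A has I_p on its block subdiagonal and zeros elsewhere), Φ1 = -i·col(0, H_0, H_1, ..., H_{n-2}), Φ2 = col(I_p, 0, ..., 0), Π = [Φ1, Φ2], and J = [[0,I_p],[I_p,0]]. Then A H - H A* = i Π J Π*. -/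
open Matrix
open scoped ComplexOrder

noncomputable section

/-- The m×m block Hankel matrix H(m) = {H_{i+j-2}}_{i,j=1}^m built from the
p×p blocks `Hk 0, Hk 1, ...`. -/
def Hmat (p : ℕ) (Hk : ℕ → Matrix (Fin p) (Fin p) ℂ) (m : ℕ) :
    Matrix (Fin m × Fin p) (Fin m × Fin p) ℂ :=
  fun x y => Hk ((x.1 : ℕ) + (y.1 : ℕ)) x.2 y.2

/-- The block lower shift matrix A (I_p on the block subdiagonal). -/
def Amat (p m : ℕ) : Matrix (Fin m × Fin p) (Fin m × Fin p) ℂ :=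
  fun x y => if (x.1 : ℕ) = (y.1 : ℕ) + 1 ∧ x.2 = y.2 then 1 else 0

/-- Φ₁(m) = -i · col(0, H_0, H_1, ..., H_{m-2}). -/
def Phi1 (p : ℕ) (Hk : ℕ → Matrix (Fin p) (Fin p) ℂ) (m : ℕ) :
    Matrix (Fin m × Fin p) (Fin p) ℂ :=
  fun x b => if (x.1 : ℕ) = 0 then 0 else -Complex.I * Hk ((x.1 : ℕ) - 1) x.2 b

/-- Φ₂(m) = col(I_p, 0, ..., 0). -/
def Phi2 (p m : ℕ) : Matrix (Fin m × Fin p) (Fin p) ℂ :=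
  fun x b => if (x.1 : ℕ) = 0 ∧ x.2 = b then 1 else 0

/-- Π(m) = [Φ₁(m), Φ₂(m)]. -/
def Pmat (p : ℕ) (Hk : ℕ → Matrix (Fin p) (Fin p) ℂ) (m : ℕ) :
    Matrix (Fin m × Fin p) (Fin p ⊕ Fin p) ℂ :=
  Matrix.fromCols (Phi1 p Hk m) (Phi2 p m)

/-- The block row P₂ = [0, ..., 0, I_p] ∈ ℂ^{p×mp}. -/
def P2 (p m : ℕ) : Matrix (Fin p) (Fin m × Fin p) ℂ :=
  fun a y => if (y.1 : ℕ) = m - 1 ∧ a = y.2 then 1 else 0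

/-- The Verblunsky-type coefficients ω_k = P₂ T(k+1) Π(k+1) of a block Hankel matrix. -/
def omegaV (p : ℕ) (Hk : ℕ → Matrix (Fin p) (Fin p) ℂ) (k : ℕ) :
    Matrix (Fin p) (Fin p ⊕ Fin p) ℂ :=
  P2 p (k + 1) * (Hmat p Hk (k + 1))⁻¹ * Pmat p Hk (k + 1)

lemma sum_shift {m : ℕ} (j : Fin m) (f : ℕ → ℂ) :
    ∑ i : Fin m, (if (j:ℕ) = (i:ℕ) + 1 then f i else 0) =
    if (j:ℕ) = 0 then 0 else f ((j:ℕ) - 1) := by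
  rcases Nat.eq_zero_or_pos (j:ℕ) with h | h
  · rw [if_pos h]
    exact Finset.sum_eq_zero fun i _ => by rw [if_neg (by omega)]
  · rw [if_neg (by omega)]
    have hj : (j:ℕ) - 1 < m := by omega
    rw [Finset.sum_eq_single (⟨(j:ℕ)-1, hj⟩ : Fin m)]
    · rw [if_pos (by simp; omega)]
    · intro b _ hb
      rw [if_neg]
      intro hc
      exact hb (by apply Fin.ext; simp; omega)
    · simp

lemma AH_apply (n p : ℕ) (Hk : ℕ → Matrix (Fin p) (Fin p) ℂ)
    (x y : Fin n × Fin p) :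
    (Amat p n * Hmat p Hk n) x y =
      if (x.1:ℕ) = 0 then 0 else Hk ((x.1:ℕ) - 1 + (y.1:ℕ)) x.2 y.2 := by
  rw [Matrix.mul_apply, Fintype.sum_prod_type]
  have h1 : ∀ i : Fin n,
      ∑ a : Fin p, Amat p n x (i, a) * Hmat p Hk n (i, a) y =
      if (x.1:ℕ) = (i:ℕ) + 1 then Hk ((i:ℕ) + (y.1:ℕ)) x.2 y.2 else 0 := by
    intro i
    simp only [Amat, Hmat, ite_and]
    by_cases h : (x.1:ℕ) = (i:ℕ) + 1
    · simp [h, Finset.sum_ite_eq, eq_comm]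
    · simp [h]
  rw [Finset.sum_congr rfl fun i _ => h1 i]
  exact sum_shift x.1 (fun k => Hk (k + (y.1:ℕ)) x.2 y.2)

lemma HAs_apply (n p : ℕ) (Hk : ℕ → Matrix (Fin p) (Fin p) ℂ)
    (x y : Fin n × Fin p) :
    (Hmat p Hk n * (Amat p n)ᴴ) x y =
      if (y.1:ℕ) = 0 then 0 else Hk ((x.1:ℕ) + ((y.1:ℕ) - 1)) x.2 y.2 := by
  rw [Matrix.mul_apply, Fintype.sum_prod_type]
  have h1 : ∀ i : Fin n,
      ∑ a : Fin p, Hmat p Hk n x (i, a) * (Amat p n)ᴴ (i, a) y =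
      if (y.1:ℕ) = (i:ℕ) + 1 then Hk ((x.1:ℕ) + (i:ℕ)) x.2 y.2 else 0 := by
    intro i
    simp only [Hmat, Amat, Matrix.conjTranspose_apply, ite_and, apply_ite,
      _root_.map_one, map_zero]
    by_cases h : (y.1:ℕ) = (i:ℕ) + 1
    · simp [h, Finset.sum_ite_eq]
    · simp [h]
  rw [Finset.sum_congr rfl fun i _ => h1 i]
  exact sum_shift y.1 (fun k => Hk ((x.1:ℕ) + k) x.2 y.2)

lemma RHS_apply (n p : ℕ) (Hk : ℕ → Matrix (Fin p) (Fin p) ℂ)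
    (x y : Fin n × Fin p) :
    (Pmat p Hk n * Jmat p * (Pmat p Hk n)ᴴ) x y =
      (if (x.1:ℕ) = 0 then 1 else 0) * (starRingEnd ℂ) (Phi1 p Hk n y x.2) +
      Phi1 p Hk n x y.2 * (if (y.1:ℕ) = 0 then 1 else 0) := by
  have hPJ : Pmat p Hk n * Jmat p = Matrix.fromCols (Phi2 p n) (Phi1 p Hk n) := by
    rw [Pmat, Jmat, Matrix.fromCols_mul_fromBlocks]
    simp
  rw [hPJ, Pmat, Matrix.conjTranspose_fromCols_eq_fromRows_conjTranspose,
    Matrix.fromCols_mul_fromRows]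
  simp only [Matrix.add_apply, Matrix.mul_apply, Matrix.conjTranspose_apply]
  congr 1
  · -- Phi2 * Phi1ᴴ
    simp only [Phi2, ite_and]
    by_cases h : (x.1:ℕ) = 0
    · simp [h, Finset.sum_ite_eq]
    · simp [h]
  · -- Phi1 * Phi2ᴴ
    simp only [Phi2, ite_and, apply_ite, _root_.map_one, map_zero]
    by_cases h : (y.1:ℕ) = 0
    · simp [h, Finset.sum_ite_eq, eq_comm]
    · simp [h]

/-- the operator identity A H - H A* = i Π J Π* for a self-adjoint
block Hankel matrix H(n). -/
theorem hankel_operator_identity (n p : ℕ)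
    (Hk : ℕ → Matrix (Fin p) (Fin p) ℂ)
    (hself : ∀ k, (Hk k)ᴴ = Hk k) :
    Amat p n * Hmat p Hk n - Hmat p Hk n * (Amat p n)ᴴ =
      Complex.I • (Pmat p Hk n * Jmat p * (Pmat p Hk n)ᴴ) := by
  ext x y
  rw [Matrix.sub_apply, AH_apply, HAs_apply, Matrix.smul_apply, RHS_apply]
  have hc : ∀ k a b, (starRingEnd ℂ) (Hk k a b) = Hk k b a := by
    intro k a b
    conv_rhs => rw [← hself k]
    simp [Matrix.conjTranspose_apply]
  simp only [Phi1]
  by_cases hx : (x.1:ℕ) = 0 <;> by_cases hy : (y.1:ℕ) = 0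
  · simp [hx, hy]
  · simp only [hx, hy, if_pos, if_neg, ite_true, ite_false]
    simp [hc, smul_eq_mul]
    ring_nf
    simp [Complex.I_sq]
  · simp only [hx, hy, ite_true, ite_false]
    simp [smul_eq_mul]
    ring_nf
    simp [Complex.I_sq]
  · have hidx : (x.1:ℕ) - 1 + (y.1:ℕ) = (x.1:ℕ) + ((y.1:ℕ) - 1) := by omega
    simp [hx, hy, hidx]
end
end

section
/- Let H(n) > 0 be a positive-definite block Hankel matrix with p×p blocks, T(m) = H(m)^{-1}, P_2 the p×np block row (0,...,0,I_p), Π(k) = [Φ1(k), Φ2(k)] as in the Hankel setting, and ω_k := P_2 T(k+1) Π(k+1) for 0 ≤ k < n. Then ω_k J ω_k* = 0 for all 0 < k < n, where J = [[0,I_p],[I_p,0]]. -/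
open Matrix
open scoped ComplexOrder

noncomputable section

lemma shift_sum {m p : ℕ} (i : Fin m) (a : Fin p) (f : Fin m × Fin p → ℂ) :
    ∑ z : Fin m × Fin p, (if (i:ℕ) = (z.1:ℕ) + 1 ∧ a = z.2 then f z else 0)
      = if hi : 0 < (i:ℕ) then f (⟨(i:ℕ) - 1, by omega⟩, a) else 0 := by
  split_ifs with hi
  · rw [Finset.sum_eq_single (⟨⟨(i:ℕ)-1, by omega⟩, a⟩ : Fin m × Fin p)]
    · rw [if_pos ⟨by simp; omega, rfl⟩]
    · intro z _ hz
      rw [if_neg]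
      rintro ⟨h1, h2⟩
      apply hz
      refine Prod.ext (Fin.ext ?_) h2.symm
      simp
      omega
    · simp
  · apply Finset.sum_eq_zero
    intro z _
    rw [if_neg]
    rintro ⟨h1, _⟩
    omega

-- A·P₂ᴴ = 0
lemma A_mul_P2H (p m : ℕ) : Amat p m * (P2 p m)ᴴ = 0 := by
  ext x a
  simp only [Matrix.mul_apply, Matrix.zero_apply, conjTranspose_apply, Amat, P2]
  apply Finset.sum_eq_zero
  intro z _
  by_cases hz : (z.1:ℕ) = m - 1 ∧ a = z.2
  · obtain ⟨hz1, _⟩ := hz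
    rw [if_neg]
    · simp
    rintro ⟨h1, _⟩
    have hx := x.1.isLt
    have hzl := z.1.isLt
    omega
  · rw [if_neg hz]
    simp

lemma P2_mul_AH (p m : ℕ) : P2 p m * (Amat p m)ᴴ = 0 := by
  have := congrArg conjTranspose (A_mul_P2H p m)
  rwa [conjTranspose_mul, conjTranspose_conjTranspose, conjTranspose_zero] at this

-- the fundamental Hankel identity
lemma hankel_identity (p m : ℕ) (Hk : ℕ → Matrix (Fin p) (Fin p) ℂ)
    (hself : ∀ k, (Hk k)ᴴ = Hk k) :
    Amat p m * Hmat p Hk m - Hmat p Hk m * (Amat p m)ᴴ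
      = Complex.I • (Pmat p Hk m * Jmat p * (Pmat p Hk m)ᴴ) := by
  have hPJP : Pmat p Hk m * Jmat p * (Pmat p Hk m)ᴴ
      = Phi2 p m * (Phi1 p Hk m)ᴴ + Phi1 p Hk m * (Phi2 p m)ᴴ := by
    rw [Pmat, Jmat, fromCols_mul_fromBlocks,
      conjTranspose_fromCols_eq_fromRows_conjTranspose, fromCols_mul_fromRows]
    rw [Matrix.mul_zero, Matrix.mul_one, Matrix.mul_one, Matrix.mul_zero, zero_add, add_zero]
  rw [hPJP]
  ext x y
  obtain ⟨i, a⟩ := x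
  obtain ⟨j, b⟩ := y
  have hAH : (Amat p m * Hmat p Hk m) (i, a) (j, b)
      = if hi : 0 < (i:ℕ) then Hk ((i:ℕ) - 1 + (j:ℕ)) a b else 0 := by
    have := shift_sum i a (fun z => Hk ((z.1:ℕ) + (j:ℕ)) z.2 b)
    simp only [Matrix.mul_apply, Amat, Hmat, ite_mul, one_mul, zero_mul]
    exact this
  have hHA : (Hmat p Hk m * (Amat p m)ᴴ) (i, a) (j, b)
      = if hj : 0 < (j:ℕ) then Hk ((i:ℕ) + ((j:ℕ) - 1)) a b else 0 := by
    have := shift_sum j b (fun z => Hk ((i:ℕ) + (z.1:ℕ)) a z.2)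
    simp only [Matrix.mul_apply, conjTranspose_apply, Amat, Hmat] at this ⊢
    rw [← this]
    apply Finset.sum_congr rfl
    intro z _
    split_ifs with h
    · simp
    · simp
  have hconj : ∀ l c d, (starRingEnd ℂ) (Hk l c d) = Hk l d c := by
    intro l c d
    have := congrFun (congrFun (hself l) d) c
    simpa [conjTranspose_apply] using this
  have h21 : (Phi2 p m * (Phi1 p Hk m)ᴴ) (i, a) (j, b)
      = if (i:ℕ) = 0 then (if (j:ℕ) = 0 then 0 else Complex.I * Hk ((j:ℕ)-1) a b) else 0 := by
    simp only [Matrix.mul_apply, Phi2, Phi1, conjTranspose_apply, ite_mul, one_mul, zero_mul]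
    rcases eq_or_ne ((i:ℕ)) 0 with hi | hi
    · rw [if_pos hi]
      rw [Finset.sum_eq_single a]
      · rw [if_pos ⟨hi, rfl⟩]
        split_ifs with hj
        · simp
        · rw [star_mul']
          simp only [star_neg, Complex.star_def, Complex.conj_I, hconj]
          ring
      · intro c _ hc
        rw [if_neg (fun h => hc h.2.symm)]
      · simp
    · rw [if_neg hi]
      apply Finset.sum_eq_zero
      intro c _
      rw [if_neg (fun h => hi h.1)]
  have h12 : (Phi1 p Hk m * (Phi2 p m)ᴴ) (i, a) (j, b)
      = if (j:ℕ) = 0 then (if (i:ℕ) = 0 then 0 else -Complex.I * Hk ((i:ℕ)-1) a b) else 0 := by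
    simp only [Matrix.mul_apply, Phi2, Phi1, conjTranspose_apply]
    rcases eq_or_ne ((i:ℕ)) 0 with hi | hi
    · rw [if_pos hi]
      rw [Finset.sum_eq_zero (fun c _ => by rw [if_pos hi, zero_mul])]
      split_ifs <;> rfl
    · rcases eq_or_ne ((j:ℕ)) 0 with hj | hj
      · rw [if_pos hj, if_neg hi]
        rw [Finset.sum_eq_single b]
        · rw [if_neg hi, if_pos ⟨hj, rfl⟩, star_one, mul_one]
        · intro c _ hc
          rw [show (if ((j:ℕ) = 0 ∧ b = c) then (1:ℂ) else 0) = 0 from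
            if_neg (fun h => hc h.2.symm)]
          simp
        · simp
      · rw [if_neg hj]
        apply Finset.sum_eq_zero
        intro c _
        rw [show (if ((j:ℕ) = 0 ∧ b = c) then (1:ℂ) else 0) = 0 from
          if_neg (fun h => hj h.1)]
        simp
  simp only [Matrix.sub_apply, Matrix.smul_apply, Matrix.add_apply, hAH, hHA, h21, h12,
    smul_eq_mul]
  rcases eq_or_ne ((i:ℕ)) 0 with hi | hi <;> rcases eq_or_ne ((j:ℕ)) 0 with hj | hj
  · simp [hi, hj]
  · rw [dif_neg (by omega), dif_pos (by omega), if_pos hi, if_neg hj, if_neg hj]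
    rw [show (i:ℕ) + ((j:ℕ) - 1) = (j:ℕ) - 1 from by omega]
    simp only [add_zero, zero_sub]
    rw [← mul_assoc, Complex.I_mul_I]
    ring
  · rw [dif_pos (by omega), dif_neg (by omega), if_neg hi, if_pos hj, if_neg hi]
    rw [show (i:ℕ) - 1 + (j:ℕ) = (i:ℕ) - 1 from by omega]
    rw [sub_zero, zero_add, ← mul_assoc]
    rw [show Complex.I * -Complex.I = 1 from by rw [mul_neg, Complex.I_mul_I]; ring]
    ring
  · rw [dif_pos (by omega), dif_pos (by omega), if_neg hi, if_neg hj]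
    rw [show (i:ℕ) - 1 + (j:ℕ) = (i:ℕ) + ((j:ℕ) - 1) from by omega]
    simp

-- Hermitian of Hmat
lemma hmat_herm (p m : ℕ) (Hk : ℕ → Matrix (Fin p) (Fin p) ℂ)
    (hself : ∀ k, (Hk k)ᴴ = Hk k) : (Hmat p Hk m).IsHermitian := by
  ext x y
  have := congrFun (congrFun (hself ((x.1:ℕ) + (y.1:ℕ))) x.2) y.2
  simp only [conjTranspose_apply] at this ⊢
  simp only [Hmat]
  have h2 : Hk ((y.1:ℕ) + (x.1:ℕ)) = Hk ((x.1:ℕ) + (y.1:ℕ)) := by rw [Nat.add_comm]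
  rw [h2]
  exact this

-- posdef of submatrix
lemma hmat_posdef (p n m : ℕ) (hmn : m ≤ n) (Hk : ℕ → Matrix (Fin p) (Fin p) ℂ)
    (hself : ∀ k, (Hk k)ᴴ = Hk k)
    (hpos : (Hmat p Hk n).PosDef) : (Hmat p Hk m).PosDef := by
  classical
  set e : Fin m × Fin p → Fin n × Fin p := fun z => (Fin.castLE hmn z.1, z.2) with he
  have hinj : Function.Injective e := by
    rintro ⟨i, a⟩ ⟨j, b⟩ h
    simp only [he, Prod.mk.injEq] at h
    exact Prod.ext (Fin.castLE_injective hmn h.1) h.2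
  refine Matrix.PosDef.of_dotProduct_mulVec_pos (hmat_herm p m Hk hself) ?_
  intro x hx
  set y : Fin n × Fin p → ℂ := Function.extend e x (0 : (Fin n × Fin p → ℂ)) with hy
  have hye : ∀ w, y (e w) = x w := fun w => hinj.extend_apply x _ w
  have hy0 : ∀ z, (¬ ∃ w, e w = z) → y z = 0 := fun z hz => by
    simp only [hy, Function.extend_apply' x _ z hz]; rfl
  have key : ∀ (g : Fin n × Fin p → ℂ), (∀ z, (¬ ∃ w, e w = z) → g z = 0) →
      ∑ z, g z = ∑ w, g (e w) := by
    intro g hg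
    rw [← Finset.sum_image (fun a _ b _ h => hinj h)]
    symm
    apply Finset.sum_subset (Finset.subset_univ _)
    intro z _ hz
    apply hg
    rintro ⟨w, rfl⟩
    exact hz (Finset.mem_image.2 ⟨w, Finset.mem_univ _, rfl⟩)
  have hyne : y ≠ 0 := by
    intro h
    apply hx
    funext w
    have := congrFun h (e w)
    rw [hye] at this
    exact this
  have hq := hpos.dotProduct_mulVec_pos hyne
  have heq : star y ⬝ᵥ (Hmat p Hk n) *ᵥ y = star x ⬝ᵥ (Hmat p Hk m) *ᵥ x := by
    simp only [dotProduct, mulVec, Pi.star_apply]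
    rw [key _ (fun z hz => by rw [hy0 z hz]; simp)]
    apply Finset.sum_congr rfl
    intro w _
    rw [hye]
    congr 1
    rw [key _ (fun z hz => by rw [hy0 z hz]; simp)]
    apply Finset.sum_congr rfl
    intro v _
    rw [hye]
    rfl
  rwa [heq] at hq

/-- for a positive definite block Hankel matrix H(n), the
Verblunsky-type coefficients satisfy ω_k J ω_k* = 0 for 0 < k < n. -/
theorem verblunsky_isotropy (n p : ℕ)
    (Hk : ℕ → Matrix (Fin p) (Fin p) ℂ)
    (hself : ∀ k, (Hk k)ᴴ = Hk k)
    (hpos : (Hmat p Hk n).PosDef) :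
    ∀ k, 0 < k → k < n →
      omegaV p Hk k * Jmat p * (omegaV p Hk k)ᴴ = 0 := by
  intro k hk hkn
  have hmn : k + 1 ≤ n := hkn
  have hpd := hmat_posdef p n (k+1) hmn Hk hself hpos
  have hherm := hmat_herm p (k+1) Hk hself
  have hdet : IsUnit (Hmat p Hk (k+1)).det :=
    (Matrix.isUnit_iff_isUnit_det _).mp hpd.isUnit
  have hTH : ((Hmat p Hk (k+1))⁻¹)ᴴ = (Hmat p Hk (k+1))⁻¹ := hherm.inv
  have hPJP : Pmat p Hk (k+1) * Jmat p * (Pmat p Hk (k+1))ᴴ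
      = (-Complex.I) • (Amat p (k+1) * Hmat p Hk (k+1)
          - Hmat p Hk (k+1) * (Amat p (k+1))ᴴ) := by
    rw [hankel_identity p (k+1) Hk hself, smul_smul, neg_mul, Complex.I_mul_I, neg_neg, one_smul]
  have e1 : P2 p (k+1) * (Hmat p Hk (k+1))⁻¹ * (Amat p (k+1) * Hmat p Hk (k+1))
      * (Hmat p Hk (k+1))⁻¹ * (P2 p (k+1))ᴴ = 0 := by
    calc P2 p (k+1) * (Hmat p Hk (k+1))⁻¹ * (Amat p (k+1) * Hmat p Hk (k+1))
          * (Hmat p Hk (k+1))⁻¹ * (P2 p (k+1))ᴴ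
        = P2 p (k+1) * ((Hmat p Hk (k+1))⁻¹ * (Amat p (k+1)
            * (Hmat p Hk (k+1) * (Hmat p Hk (k+1))⁻¹ * (P2 p (k+1))ᴴ))) := by
          simp only [Matrix.mul_assoc]
      _ = P2 p (k+1) * ((Hmat p Hk (k+1))⁻¹ * (Amat p (k+1) * (P2 p (k+1))ᴴ)) := by
          rw [Matrix.mul_nonsing_inv _ hdet, Matrix.one_mul]
      _ = 0 := by rw [A_mul_P2H, Matrix.mul_zero, Matrix.mul_zero]
  have e2 : P2 p (k+1) * (Hmat p Hk (k+1))⁻¹ * (Hmat p Hk (k+1) * (Amat p (k+1))ᴴ)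
      * (Hmat p Hk (k+1))⁻¹ * (P2 p (k+1))ᴴ = 0 := by
    calc P2 p (k+1) * (Hmat p Hk (k+1))⁻¹ * (Hmat p Hk (k+1) * (Amat p (k+1))ᴴ)
          * (Hmat p Hk (k+1))⁻¹ * (P2 p (k+1))ᴴ
        = P2 p (k+1) * ((Hmat p Hk (k+1))⁻¹ * Hmat p Hk (k+1))
            * (Amat p (k+1))ᴴ * ((Hmat p Hk (k+1))⁻¹ * (P2 p (k+1))ᴴ) := by
          simp only [Matrix.mul_assoc]
      _ = P2 p (k+1) * (Amat p (k+1))ᴴ * ((Hmat p Hk (k+1))⁻¹ * (P2 p (k+1))ᴴ) := by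
          rw [Matrix.nonsing_inv_mul _ hdet, Matrix.mul_one]
      _ = 0 := by rw [P2_mul_AH, Matrix.zero_mul]
  calc omegaV p Hk k * Jmat p * (omegaV p Hk k)ᴴ
      = P2 p (k+1) * (Hmat p Hk (k+1))⁻¹
          * (Pmat p Hk (k+1) * Jmat p * (Pmat p Hk (k+1))ᴴ)
          * (Hmat p Hk (k+1))⁻¹ * (P2 p (k+1))ᴴ := by
        simp only [omegaV, conjTranspose_mul, hTH, Matrix.mul_assoc]
    _ = 0 := by
        rw [hPJP]
        simp only [Matrix.mul_smul, Matrix.smul_mul, Matrix.mul_sub, Matrix.sub_mul]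
        rw [e1, e2, sub_zero, smul_zero]
end
end

section
/- Let H(n) > 0 be a positive-definite block Hankel matrix with p×p blocks, partitioned as H(k+1) = [[H(k), H12],[H21, H_{2k}]], and let t_{k+1} = (H_{2k} - H21 T(k) H12)^{-1} be the inverse Schur complement, where T(k) = H(k)^{-1}. With ω_k := P_2 T(k+1) Π(k+1) and J = [[0,I_p],[I_p,0]], one has i ω_k J ω_{k-1}* = t_{k+1} for 0 < k < n. -/
open Matrix
open scoped ComplexOrder

noncomputable section

/-- The off-diagonal block H12 of the partition H(k+1) = [[H(k), H12],[H21, H_{2k}]]. -/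
def H12blk (p : ℕ) (Hk : ℕ → Matrix (Fin p) (Fin p) ℂ) (k : ℕ) :
    Matrix (Fin k × Fin p) (Fin p) ℂ :=
  fun x b => Hk (k + (x.1 : ℕ)) x.2 b

/-- t_{k+1} = (H_{2k} - H21 T(k) H12)⁻¹, the inverse Schur complement. -/
def tmat (p : ℕ) (Hk : ℕ → Matrix (Fin p) (Fin p) ℂ) (k : ℕ) :
    Matrix (Fin p) (Fin p) ℂ :=
  (Hk (2 * k) - (H12blk p Hk k)ᴴ * (Hmat p Hk k)⁻¹ * H12blk p Hk k)⁻¹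

/-! ### Auxiliary material -/

/-- The (k+1)p × kp block embedding matrix (identity on the first k block rows). -/
def Emat (p k : ℕ) : Matrix (Fin (k+1) × Fin p) (Fin k × Fin p) ℂ :=
  fun x y => if (x.1 : ℕ) = (y.1 : ℕ) ∧ x.2 = y.2 then 1 else 0

lemma sum_single_term {α : Type*} [Fintype α] (t : α) (F : α → ℂ)
    (h : ∀ z, z ≠ t → F z = 0) : (∑ z, F z) = F t :=
  Finset.sum_eq_single_of_mem t (Finset.mem_univ t) (fun z _ hz => h z hz)

section Aux

variable {p : ℕ} {Hk : ℕ → Matrix (Fin p) (Fin p) ℂ}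

lemma hconj (hself : ∀ t, (Hk t)ᴴ = Hk t) (t : ℕ) (x y : Fin p) :
    star (Hk t x y) = Hk t y x :=
  (Matrix.conjTranspose_apply (Hk t) x y).symm.trans
    (congrFun (congrFun (hself t) y) x)

lemma hmat_herm_s10 (hself : ∀ t, (Hk t)ᴴ = Hk t) (m : ℕ) :
    (Hmat p Hk m)ᴴ = Hmat p Hk m := by
  ext x y
  rw [Matrix.conjTranspose_apply]
  show star (Hk _ _ _) = Hk _ _ _
  rw [hconj hself, Nat.add_comm]

lemma P2_mul_P2H (m : ℕ) (hm : 0 < m) : P2 p m * (P2 p m)ᴴ = 1 := by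
  ext a b
  rw [Matrix.mul_apply,
    sum_single_term ((⟨m-1, by omega⟩ : Fin m), a)
      (fun z => P2 p m a z * (P2 p m)ᴴ z b) ?_]
  · by_cases hab : a = b
    · subst hab; simp [P2, Matrix.one_apply]
    · simp [P2, Matrix.one_apply, hab, Ne.symm hab]
  · rintro ⟨l, c⟩ hz
    by_cases h1 : (l : ℕ) = m - 1
    · by_cases h2 : a = c
      · exact absurd (Prod.ext_iff.mpr ⟨Fin.ext h1, h2.symm⟩) hz
      · simp [P2, h2]
    · simp [P2, h1]

lemma P2_mul_Atrans (k : ℕ) : P2 p (k+1) * (Amat p (k+1))ᵀ = 0 := by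
  ext a y
  rw [Matrix.mul_apply, Matrix.zero_apply]
  refine Finset.sum_eq_zero ?_
  rintro ⟨l, c⟩ -
  by_cases h1 : (l : ℕ) = k
  · have h2 : ¬((y.1 : ℕ) = (l : ℕ) + 1) := by have := y.1.isLt; omega
    simp [Amat, h2]
  · simp [P2, h1]

lemma P2_mul_Emat (k : ℕ) : P2 p (k+1) * Emat p k = 0 := by
  ext a y
  rw [Matrix.mul_apply, Matrix.zero_apply]
  refine Finset.sum_eq_zero ?_
  rintro ⟨l, c⟩ -
  by_cases h1 : (l : ℕ) = k
  · have h2 : ¬((l : ℕ) = (y.1 : ℕ)) := by have := y.1.isLt; omega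
    simp [Emat, h2]
  · simp [P2, h1]

lemma Amat_mul_P2H (k : ℕ) : Amat p (k+1) * (P2 p (k+1))ᴴ = 0 := by
  ext x b
  rw [Matrix.mul_apply, Matrix.zero_apply]
  refine Finset.sum_eq_zero ?_
  rintro ⟨l, c⟩ -
  by_cases h1 : (l : ℕ) = k
  · have h2 : ¬((x.1 : ℕ) = (l : ℕ) + 1) := by have := x.1.isLt; omega
    simp [Amat, h2]
  · simp [P2, Matrix.conjTranspose_apply, h1]

lemma Emat_mul_P2H (k : ℕ) (hk : 0 < k) (l : Fin (k+1)) (c b : Fin p) :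
    (Emat p k * (P2 p k)ᴴ) (l, c) b
      = if (l : ℕ) = k - 1 ∧ c = b then 1 else 0 := by
  rw [Matrix.mul_apply]
  by_cases h : (l : ℕ) = k - 1 ∧ c = b
  · rw [sum_single_term ((⟨k-1, by omega⟩ : Fin k), c)
      (fun z => Emat p k (l, c) z * (P2 p k)ᴴ z b) ?_]
    · simp [Emat, P2, Matrix.conjTranspose_apply, h.1, h.2, if_pos h]
    · rintro ⟨j, d⟩ hz
      by_cases h2 : (l : ℕ) = (j : ℕ)
      · by_cases h3 : c = d
        · refine absurd (Prod.ext_iff.mpr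
            ⟨Fin.ext (show (j : ℕ) = k - 1 from by omega), h3.symm⟩) hz
        · simp [Emat, h3]
      · simp [Emat, h2]
  · rw [if_neg h]
    refine Finset.sum_eq_zero ?_
    rintro ⟨j, d⟩ -
    by_cases h2 : (l : ℕ) = (j : ℕ)
    · by_cases h3 : c = d
      · have h4 : ¬((j : ℕ) = k - 1 ∧ b = d) := by
          rintro ⟨h5, h6⟩
          exact h ⟨by omega, by rw [h3, ← h6]⟩
        simp [P2, Matrix.conjTranspose_apply, h4]
      · simp [Emat, h3]
    · simp [Emat, h2]

lemma Amat_mul_Emat_P2H (k : ℕ) (hk : 0 < k) :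
    Amat p (k+1) * (Emat p k * (P2 p k)ᴴ) = (P2 p (k+1))ᴴ := by
  ext ⟨i, a⟩ b
  rw [Matrix.mul_apply]
  by_cases hik : (i : ℕ) = k
  · rw [sum_single_term ((⟨k-1, by omega⟩ : Fin (k+1)), a)
      (fun z => Amat p (k+1) (i, a) z * (Emat p k * (P2 p k)ᴴ) z b) ?_]
    · rw [Emat_mul_P2H k hk]
      by_cases hab : a = b
      · subst hab
        simp [Amat, P2, Matrix.conjTranspose_apply, hik,
          show k - 1 + 1 = k from by omega]
      · simp [Amat, P2, Matrix.conjTranspose_apply, hab, Ne.symm hab]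
    · rintro ⟨l, c⟩ hz
      by_cases h2 : (i : ℕ) = (l : ℕ) + 1
      · by_cases h3 : a = c
        · refine absurd (Prod.ext_iff.mpr
            ⟨Fin.ext (show (l : ℕ) = k - 1 from by omega), h3.symm⟩) hz
        · simp [Amat, h3]
      · simp [Amat, h2]
  · have h0 : (P2 p (k+1))ᴴ (i, a) b = 0 := by
      simp [P2, Matrix.conjTranspose_apply, hik]
    rw [h0]
    refine Finset.sum_eq_zero ?_
    rintro ⟨l, c⟩ -
    by_cases h2 : (i : ℕ) = (l : ℕ) + 1
    · rw [Emat_mul_P2H k hk]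
      have h3 : ¬((l : ℕ) = k - 1 ∧ c = b) := by
        rintro ⟨h4, -⟩
        exact hik (by omega)
      simp [h3]
    · simp [Amat, h2]

lemma Hmat_mul_Emat (hself : ∀ t, (Hk t)ᴴ = Hk t) (k : ℕ) :
    Hmat p Hk (k+1) * Emat p k
      = Emat p k * Hmat p Hk k + (P2 p (k+1))ᴴ * (H12blk p Hk k)ᴴ := by
  ext ⟨i, a⟩ ⟨j, b⟩
  rw [Matrix.mul_apply,
    sum_single_term ((⟨(j : ℕ), by omega⟩ : Fin (k+1)), b)
      (fun z => Hmat p Hk (k+1) (i, a) z * Emat p k z (j, b)) ?_]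
  · rw [Matrix.add_apply, Matrix.mul_apply, Matrix.mul_apply]
    by_cases hik : (i : ℕ) < k
    · rw [sum_single_term ((⟨(i : ℕ), hik⟩ : Fin k), a)
        (fun z => Emat p k (i, a) z * Hmat p Hk k z (j, b)) ?_,
        Finset.sum_eq_zero (fun c _ => ?_)]
      · simp [Emat, Hmat]
      · simp [P2, Matrix.conjTranspose_apply,
          show ¬((i : ℕ) = k) from by omega]
      · rintro ⟨l, c⟩ hz
        by_cases h2 : (i : ℕ) = (l : ℕ)
        · by_cases h3 : a = c
          · refine absurd (Prod.ext_iff.mpr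
              ⟨Fin.ext (show (l : ℕ) = (i : ℕ) from h2.symm), h3.symm⟩) hz
          · simp [Emat, h3]
        · simp [Emat, h2]
    · have hik' : (i : ℕ) = k := by have := i.isLt; omega
      rw [Finset.sum_eq_zero (fun z _ => ?_),
        sum_single_term a
          (fun c => (P2 p (k+1))ᴴ (i, a) c * (H12blk p Hk k)ᴴ c (j, b)) ?_]
      · simp [Emat, Hmat, P2, H12blk, Matrix.conjTranspose_apply, hik',
          hconj hself]
      · intro c hc
        simp [P2, Matrix.conjTranspose_apply, hc]
      · obtain ⟨l, c⟩ := z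
        simp [Emat, show ¬((i : ℕ) = (l : ℕ)) from by have := l.isLt; omega]
  · rintro ⟨l, c⟩ hz
    by_cases h2 : (l : ℕ) = (j : ℕ)
    · by_cases h3 : c = b
      · exact absurd (Prod.ext_iff.mpr ⟨Fin.ext h2, h3⟩) hz
      · simp [Emat, h3]
    · simp [Emat, h2]

lemma Hmat_mul_P2H (hself : ∀ t, (Hk t)ᴴ = Hk t) (k : ℕ) :
    Hmat p Hk (k+1) * (P2 p (k+1))ᴴ
      = Emat p k * H12blk p Hk k + (P2 p (k+1))ᴴ * (Hk (2 * k)) := by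
  ext ⟨i, a⟩ b
  rw [Matrix.mul_apply,
    sum_single_term ((⟨k, by omega⟩ : Fin (k+1)), b)
      (fun z => Hmat p Hk (k+1) (i, a) z * (P2 p (k+1))ᴴ z b) ?_]
  · rw [Matrix.add_apply, Matrix.mul_apply, Matrix.mul_apply]
    by_cases hik : (i : ℕ) < k
    · rw [sum_single_term ((⟨(i : ℕ), hik⟩ : Fin k), a)
        (fun z => Emat p k (i, a) z * H12blk p Hk k z b) ?_,
        Finset.sum_eq_zero (fun c _ => ?_)]
      · simp [Emat, Hmat, H12blk, P2, Matrix.conjTranspose_apply,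
          show (i : ℕ) + k = k + (i : ℕ) from Nat.add_comm _ _]
      · simp [P2, Matrix.conjTranspose_apply,
          show ¬((i : ℕ) = k) from by omega]
      · rintro ⟨l, c⟩ hz
        by_cases h2 : (i : ℕ) = (l : ℕ)
        · by_cases h3 : a = c
          · refine absurd (Prod.ext_iff.mpr
              ⟨Fin.ext (show (l : ℕ) = (i : ℕ) from h2.symm), h3.symm⟩) hz
          · simp [Emat, h3]
        · simp [Emat, h2]
    · have hik' : (i : ℕ) = k := by have := i.isLt; omega
      rw [Finset.sum_eq_zero (fun z _ => ?_),
        sum_single_term a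
          (fun c => (P2 p (k+1))ᴴ (i, a) c * Hk (2 * k) c b) ?_]
      · simp [Hmat, P2, Matrix.conjTranspose_apply, hik',
          show k + k = 2 * k from by omega]
      · intro c hc
        simp [P2, Matrix.conjTranspose_apply, hc]
      · obtain ⟨l, c⟩ := z
        simp [Emat, show ¬((i : ℕ) = (l : ℕ)) from by have := l.isLt; omega]
  · rintro ⟨l, c⟩ hz
    by_cases h2 : (l : ℕ) = k
    · by_cases h3 : b = c
      · refine absurd (Prod.ext_iff.mpr
          ⟨Fin.ext (show (l : ℕ) = k from h2), h3.symm⟩) hz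
      · simp [P2, Matrix.conjTranspose_apply, h3]
    · simp [P2, Matrix.conjTranspose_apply, h2]

lemma AH_apply_s10 (k : ℕ) (i : Fin (k+1)) (a : Fin p) (j : Fin (k+1)) (b : Fin p) :
    (Amat p (k+1) * Hmat p Hk (k+1)) (i, a) (j, b)
      = if (i : ℕ) = 0 then 0 else Hk ((i : ℕ) - 1 + (j : ℕ)) a b := by
  rw [Matrix.mul_apply]
  by_cases hi : (i : ℕ) = 0
  · rw [if_pos hi]
    refine Finset.sum_eq_zero ?_
    rintro ⟨l, c⟩ -
    simp [Amat, show ¬((i : ℕ) = (l : ℕ) + 1) from by omega]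
  · rw [if_neg hi,
      sum_single_term ((⟨(i : ℕ) - 1, by omega⟩ : Fin (k+1)), a)
        (fun z => Amat p (k+1) (i, a) z * Hmat p Hk (k+1) z (j, b)) ?_]
    · simp [Amat, Hmat, show (i : ℕ) - 1 + 1 = (i : ℕ) from by omega]
    · rintro ⟨l, c⟩ hz
      by_cases h2 : (i : ℕ) = (l : ℕ) + 1
      · by_cases h3 : a = c
        · refine absurd (Prod.ext_iff.mpr
            ⟨Fin.ext (show (l : ℕ) = (i : ℕ) - 1 from by omega), h3.symm⟩) hz
        · simp [Amat, h3]
      · simp [Amat, h2]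

lemma HAt_apply (k : ℕ) (i : Fin (k+1)) (a : Fin p) (j : Fin (k+1)) (b : Fin p) :
    (Hmat p Hk (k+1) * (Amat p (k+1))ᵀ) (i, a) (j, b)
      = if (j : ℕ) = 0 then 0 else Hk ((i : ℕ) + (j : ℕ) - 1) a b := by
  rw [Matrix.mul_apply]
  by_cases hj : (j : ℕ) = 0
  · rw [if_pos hj]
    refine Finset.sum_eq_zero ?_
    rintro ⟨l, c⟩ -
    simp [Amat, show ¬((j : ℕ) = (l : ℕ) + 1) from by omega]
  · rw [if_neg hj,
      sum_single_term ((⟨(j : ℕ) - 1, by omega⟩ : Fin (k+1)), b)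
        (fun z => Hmat p Hk (k+1) (i, a) z * (Amat p (k+1))ᵀ z (j, b)) ?_]
    · simp [Amat, Hmat, show (j : ℕ) - 1 + 1 = (j : ℕ) from by omega,
        show (i : ℕ) + ((j : ℕ) - 1) = (i : ℕ) + (j : ℕ) - 1 from by omega]
    · rintro ⟨l, c⟩ hz
      by_cases h2 : (j : ℕ) = (l : ℕ) + 1
      · by_cases h3 : b = c
        · refine absurd (Prod.ext_iff.mpr
            ⟨Fin.ext (show (l : ℕ) = (j : ℕ) - 1 from by omega), h3.symm⟩) hz
        · simp [Amat, h3]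
      · simp [Amat, h2]

lemma Phi1_Phi2H_apply (k : ℕ) (i : Fin (k+1)) (a : Fin p) (j : Fin k) (b : Fin p) :
    (Phi1 p Hk (k+1) * (Phi2 p k)ᴴ) (i, a) (j, b)
      = if (j : ℕ) = 0 then
          (if (i : ℕ) = 0 then 0 else -Complex.I * Hk ((i : ℕ) - 1) a b)
        else 0 := by
  rw [Matrix.mul_apply]
  by_cases hj : (j : ℕ) = 0
  · rw [if_pos hj,
      sum_single_term b (fun c => Phi1 p Hk (k+1) (i, a) c * (Phi2 p k)ᴴ c (j, b)) ?_]
    · simp [Phi1, Phi2, Matrix.conjTranspose_apply, hj]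
    · intro c hc
      simp [Phi2, Matrix.conjTranspose_apply, Ne.symm hc]
  · rw [if_neg hj]
    refine Finset.sum_eq_zero (fun c _ => ?_)
    simp [Phi2, Matrix.conjTranspose_apply, hj]

lemma Phi2_Phi1H_apply (hself : ∀ t, (Hk t)ᴴ = Hk t)
    (k : ℕ) (i : Fin (k+1)) (a : Fin p) (j : Fin k) (b : Fin p) :
    (Phi2 p (k+1) * (Phi1 p Hk k)ᴴ) (i, a) (j, b)
      = if (i : ℕ) = 0 then
          (if (j : ℕ) = 0 then 0 else Complex.I * Hk ((j : ℕ) - 1) a b)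
        else 0 := by
  rw [Matrix.mul_apply]
  by_cases hi : (i : ℕ) = 0
  · rw [if_pos hi,
      sum_single_term a (fun c => Phi2 p (k+1) (i, a) c * (Phi1 p Hk k)ᴴ c (j, b)) ?_]
    · by_cases hj : (j : ℕ) = 0
      · simp [Phi1, Phi2, Matrix.conjTranspose_apply, hi, hj]
      · simp [Phi1, Phi2, Matrix.conjTranspose_apply, hi, hj, star_mul',
          Complex.star_def, Complex.conj_I, hconj hself]
    · intro c hc
      simp [Phi2, Matrix.conjTranspose_apply, Ne.symm hc]
  · rw [if_neg hi]
    refine Finset.sum_eq_zero (fun c _ => ?_)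
    simp [Phi2, hi]

lemma smul_Pi_J_PiH (hself : ∀ t, (Hk t)ᴴ = Hk t) (k : ℕ) :
    Complex.I • (Pmat p Hk (k+1) * (Jmat p * (Pmat p Hk k)ᴴ))
      = (Amat p (k+1) * Hmat p Hk (k+1)
          - Hmat p Hk (k+1) * (Amat p (k+1))ᵀ) * Emat p k := by
  rw [← Matrix.mul_assoc, Pmat, Pmat, Jmat,
    conjTranspose_fromCols_eq_fromRows_conjTranspose,
    fromCols_mul_fromBlocks, fromCols_mul_fromRows]
  simp only [Matrix.mul_zero, Matrix.mul_one, zero_add, add_zero]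
  ext ⟨i, a⟩ ⟨j, b⟩
  have hR : ((Amat p (k+1) * Hmat p Hk (k+1)
      - Hmat p Hk (k+1) * (Amat p (k+1))ᵀ) * Emat p k) (i, a) (j, b)
      = (if (i : ℕ) = 0 then 0 else Hk ((i : ℕ) - 1 + (j : ℕ)) a b)
        - (if (j : ℕ) = 0 then 0 else Hk ((i : ℕ) + (j : ℕ) - 1) a b) := by
    rw [Matrix.mul_apply,
      sum_single_term ((⟨(j : ℕ), by omega⟩ : Fin (k+1)), b)
        (fun z => (Amat p (k+1) * Hmat p Hk (k+1)
          - Hmat p Hk (k+1) * (Amat p (k+1))ᵀ) (i, a) z * Emat p k z (j, b)) ?_]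
    · rw [Matrix.sub_apply, AH_apply_s10, HAt_apply]
      simp [Emat]
    · rintro ⟨l, c⟩ hz
      by_cases h2 : (l : ℕ) = (j : ℕ)
      · by_cases h3 : c = b
        · exact absurd (Prod.ext_iff.mpr ⟨Fin.ext h2, h3⟩) hz
        · simp [Emat, h3]
      · simp [Emat, h2]
  rw [Matrix.smul_apply, Matrix.add_apply, Phi2_Phi1H_apply hself,
    Phi1_Phi2H_apply, hR, smul_eq_mul]
  by_cases hi : (i : ℕ) = 0 <;> by_cases hj : (j : ℕ) = 0
  · simp [hi, hj]
  · simp [hi, hj, ← mul_assoc, Complex.I_mul_I]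
  · simp [hi, hj, ← mul_assoc, Complex.I_mul_I, mul_neg]
  · simp only [if_neg hi, if_neg hj]
    rw [show (i : ℕ) - 1 + (j : ℕ) = (i : ℕ) + (j : ℕ) - 1 from by omega,
      sub_self, add_zero, mul_zero]


lemma extend_sum {m' n' : Type*} [Fintype m'] [Fintype n'] [DecidableEq m']
    [DecidableEq n'] {f : m' → n'} (hf : Function.Injective f)
    (u : m' → ℂ) (g : n' → ℂ) :
    (∑ b, Function.extend f u 0 b * g b) = ∑ i, u i * g (f i) := by
  rw [← Finset.sum_subset (Finset.subset_univ (Finset.univ.image f)) ?_]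
  · rw [Finset.sum_image (fun i _ j _ h => hf h)]
    refine Finset.sum_congr rfl (fun i _ => ?_)
    rw [hf.extend_apply]
  · intro b _ hb
    have hb' : ¬∃ i, f i = b := by
      rintro ⟨i, rfl⟩
      exact hb (Finset.mem_image.mpr ⟨i, Finset.mem_univ i, rfl⟩)
    rw [Function.extend_apply' u (0 : n' → ℂ) b hb', Pi.zero_apply, zero_mul]

lemma posdef_submatrix {m' n' : Type*} [Fintype m'] [Fintype n'] [DecidableEq m']
    [DecidableEq n'] {M : Matrix n' n' ℂ} (hM : M.PosDef) {f : m' → n'}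
    (hf : Function.Injective f) : (M.submatrix f f).PosDef := by
  refine Matrix.PosDef.of_dotProduct_mulVec_pos (hM.1.submatrix f) (fun x hx => ?_)
  have hy : Function.extend f x 0 ≠ 0 := by
    obtain ⟨i, hi⟩ := Function.ne_iff.mp hx
    refine Function.ne_iff.mpr ⟨f i, ?_⟩
    rw [hf.extend_apply]
    simpa using hi
  have hstar : star (Function.extend f x 0) = Function.extend f (star x) 0 := by
    funext b
    by_cases hb : ∃ i, f i = b
    · obtain ⟨i, rfl⟩ := hb
      rw [Pi.star_apply, hf.extend_apply, hf.extend_apply, Pi.star_apply]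
    · rw [Pi.star_apply, Function.extend_apply' _ _ _ hb,
        Function.extend_apply' _ _ _ hb]
      simp
  have h2 : ∀ b, (M *ᵥ Function.extend f x 0) b = ∑ j, M b (f j) * x j := by
    intro b
    show (∑ b', M b b' * Function.extend f x 0 b') = _
    calc (∑ b', M b b' * Function.extend f x 0 b')
        = ∑ b', Function.extend f x 0 b' * M b b' := by
          refine Finset.sum_congr rfl (fun b' _ => mul_comm _ _)
      _ = ∑ j, x j * M b (f j) := extend_sum hf x _
      _ = ∑ j, M b (f j) * x j := by
          refine Finset.sum_congr rfl (fun j _ => mul_comm _ _)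
  have key : star x ⬝ᵥ ((M.submatrix f f) *ᵥ x)
      = star (Function.extend f x 0) ⬝ᵥ (M *ᵥ Function.extend f x 0) := by
    rw [hstar]
    show (∑ i, star x i * (∑ j, M (f i) (f j) * x j))
        = ∑ b, Function.extend f (star x) 0 b * (M *ᵥ Function.extend f x 0) b
    rw [extend_sum hf (star x) (fun b => (M *ᵥ Function.extend f x 0) b)]
    refine Finset.sum_congr rfl (fun i _ => ?_)
    rw [h2]
  rw [key]
  exact hM.dotProduct_mulVec_pos hy

lemma hank_posdef {m n : ℕ} (h : m ≤ n) (hpos : (Hmat p Hk n).PosDef) :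
    (Hmat p Hk m).PosDef := by
  have hsub : Hmat p Hk m
      = (Hmat p Hk n).submatrix (fun x => (Fin.castLE h x.1, x.2))
          (fun x => (Fin.castLE h x.1, x.2)) := by
    ext ⟨i, a⟩ ⟨j, b⟩
    simp [Hmat, Matrix.submatrix_apply]
  rw [hsub]
  refine posdef_submatrix hpos ?_
  rintro ⟨i, a⟩ ⟨j, b⟩ hxy
  have h1 := congrArg Prod.fst hxy
  have h2 := congrArg Prod.snd hxy
  simp only at h1 h2
  exact Prod.ext_iff.mpr ⟨Fin.ext (by simpa using congrArg Fin.val h1), h2⟩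

end Aux

/-- i ω_k J ω_{k-1}* = t_{k+1} for 0 < k < n. -/
theorem verblunsky_pairing_eq_schur (n p : ℕ)
    (Hk : ℕ → Matrix (Fin p) (Fin p) ℂ)
    (hself : ∀ k, (Hk k)ᴴ = Hk k)
    (hpos : (Hmat p Hk n).PosDef) :
    ∀ k, 0 < k → k < n →
      Complex.I • (omegaV p Hk k * Jmat p * (omegaV p Hk (k - 1))ᴴ) = tmat p Hk k := by
  intro k hk0 hkn
  obtain ⟨m, rfl⟩ : ∃ m, k = m + 1 := ⟨k - 1, (Nat.succ_pred_eq_of_pos hk0).symm⟩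
  simp only [Nat.add_sub_cancel]
  have hpd2 : (Hmat p Hk (m+1+1)).PosDef := hank_posdef (by omega) hpos
  have hpd1 : (Hmat p Hk (m+1)).PosDef := hank_posdef (by omega) hpos
  have hd2 : IsUnit (Hmat p Hk (m+1+1)).det := isUnit_iff_ne_zero.mpr hpd2.det_pos.ne'
  have hd1 : IsUnit (Hmat p Hk (m+1)).det := isUnit_iff_ne_zero.mpr hpd1.det_pos.ne'
  have hTH : (Hmat p Hk (m+1+1))⁻¹ * Hmat p Hk (m+1+1) = 1 :=
    Matrix.nonsing_inv_mul _ hd2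
  have hHS : Hmat p Hk (m+1) * (Hmat p Hk (m+1))⁻¹ = 1 :=
    Matrix.mul_nonsing_inv _ hd1
  have hSherm : ((Hmat p Hk (m+1))⁻¹)ᴴ = (Hmat p Hk (m+1))⁻¹ := by
    rw [Matrix.conjTranspose_nonsing_inv, hmat_herm_s10 hself]
  calc Complex.I • (omegaV p Hk (m + 1) * Jmat p * (omegaV p Hk m)ᴴ)
      = P2 p (m+1+1) * ((Hmat p Hk (m+1+1))⁻¹ *
          ((Complex.I • (Pmat p Hk (m+1+1) * (Jmat p * (Pmat p Hk (m+1))ᴴ))) *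
            ((Hmat p Hk (m+1))⁻¹ * (P2 p (m+1))ᴴ))) := by
        simp only [omegaV, Matrix.conjTranspose_mul, hSherm,
          Matrix.smul_mul, Matrix.mul_smul, Matrix.mul_assoc]
    _ = P2 p (m+1+1) * ((Hmat p Hk (m+1+1))⁻¹ *
          (((Amat p (m+1+1) * Hmat p Hk (m+1+1)
              - Hmat p Hk (m+1+1) * (Amat p (m+1+1))ᵀ) * Emat p (m+1)) *
            ((Hmat p Hk (m+1))⁻¹ * (P2 p (m+1))ᴴ))) := by
        rw [smul_Pi_J_PiH hself (m+1)]
    _ = P2 p (m+1+1) * ((Hmat p Hk (m+1+1))⁻¹ * (P2 p (m+1+1))ᴴ) := by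
        have expand : ((Amat p (m+1+1) * Hmat p Hk (m+1+1)
            - Hmat p Hk (m+1+1) * (Amat p (m+1+1))ᵀ) * Emat p (m+1)) *
              ((Hmat p Hk (m+1))⁻¹ * (P2 p (m+1))ᴴ)
            = Amat p (m+1+1) * (Hmat p Hk (m+1+1) *
                (Emat p (m+1) * ((Hmat p Hk (m+1))⁻¹ * (P2 p (m+1))ᴴ)))
              - Hmat p Hk (m+1+1) * ((Amat p (m+1+1))ᵀ *
                (Emat p (m+1) * ((Hmat p Hk (m+1))⁻¹ * (P2 p (m+1))ᴴ))) := by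
          simp only [Matrix.sub_mul, Matrix.mul_assoc]
        rw [expand, Matrix.mul_sub, Matrix.mul_sub]
        have hterm2 : P2 p (m+1+1) * ((Hmat p Hk (m+1+1))⁻¹ *
            (Hmat p Hk (m+1+1) * ((Amat p (m+1+1))ᵀ *
              (Emat p (m+1) * ((Hmat p Hk (m+1))⁻¹ * (P2 p (m+1))ᴴ))))) = 0 := by
          rw [← Matrix.mul_assoc ((Hmat p Hk (m+1+1))⁻¹) (Hmat p Hk (m+1+1)),
            hTH, Matrix.one_mul,
            ← Matrix.mul_assoc (P2 p (m+1+1)) ((Amat p (m+1+1))ᵀ),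
            P2_mul_Atrans, Matrix.zero_mul]
        have hE : Hmat p Hk (m+1+1) *
            (Emat p (m+1) * ((Hmat p Hk (m+1))⁻¹ * (P2 p (m+1))ᴴ))
            = Emat p (m+1) * (P2 p (m+1))ᴴ
              + (P2 p (m+1+1))ᴴ * ((H12blk p Hk (m+1))ᴴ *
                  ((Hmat p Hk (m+1))⁻¹ * (P2 p (m+1))ᴴ)) := by
          rw [← Matrix.mul_assoc (Hmat p Hk (m+1+1)) (Emat p (m+1)),
            Hmat_mul_Emat hself, Matrix.add_mul]
          congr 1
          · rw [Matrix.mul_assoc, ← Matrix.mul_assoc (Hmat p Hk (m+1)),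
              hHS, Matrix.one_mul]
          · rw [Matrix.mul_assoc]
        rw [hE, Matrix.mul_add, Amat_mul_Emat_P2H (m+1) (by omega),
          ← Matrix.mul_assoc (Amat p (m+1+1)) ((P2 p (m+1+1))ᴴ),
          Amat_mul_P2H, Matrix.zero_mul, add_zero, hterm2, sub_zero]
    _ = tmat p Hk (m+1) := by
        have hzero : (P2 p (m+1+1) * (Hmat p Hk (m+1+1))⁻¹) *
            (Hmat p Hk (m+1+1) * Emat p (m+1)) = 0 := by
          rw [← Matrix.mul_assoc, Matrix.mul_assoc (P2 p (m+1+1)), hTH,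
            Matrix.mul_one, P2_mul_Emat]
        have hone : (P2 p (m+1+1) * (Hmat p Hk (m+1+1))⁻¹) *
            (Hmat p Hk (m+1+1) * (P2 p (m+1+1))ᴴ) = 1 := by
          rw [← Matrix.mul_assoc, Matrix.mul_assoc (P2 p (m+1+1)), hTH,
            Matrix.mul_one, P2_mul_P2H _ (by omega)]
        rw [Hmat_mul_Emat hself] at hzero
        rw [Hmat_mul_P2H hself] at hone
        have hzero2 : P2 p (m+1+1) * ((Hmat p Hk (m+1+1))⁻¹ *
              (Emat p (m+1) * Hmat p Hk (m+1)))
            + P2 p (m+1+1) * ((Hmat p Hk (m+1+1))⁻¹ *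
              ((P2 p (m+1+1))ᴴ * (H12blk p Hk (m+1))ᴴ)) = 0 := by
          simpa only [Matrix.mul_add, Matrix.mul_assoc] using hzero
        have hone2 : P2 p (m+1+1) * ((Hmat p Hk (m+1+1))⁻¹ *
              (Emat p (m+1) * H12blk p Hk (m+1)))
            + P2 p (m+1+1) * ((Hmat p Hk (m+1+1))⁻¹ *
              ((P2 p (m+1+1))ᴴ * Hk (2 * (m+1)))) = 1 := by
          simpa only [Matrix.mul_add, Matrix.mul_assoc] using hone
        have hXHm : P2 p (m+1+1) * ((Hmat p Hk (m+1+1))⁻¹ *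
              (Emat p (m+1) * Hmat p Hk (m+1)))
            = -(P2 p (m+1+1) * ((Hmat p Hk (m+1+1))⁻¹ *
              ((P2 p (m+1+1))ᴴ * (H12blk p Hk (m+1))ᴴ))) :=
          eq_neg_of_add_eq_zero_left hzero2
        have hX : P2 p (m+1+1) * ((Hmat p Hk (m+1+1))⁻¹ * Emat p (m+1))
            = -(P2 p (m+1+1) * ((Hmat p Hk (m+1+1))⁻¹ *
                ((P2 p (m+1+1))ᴴ * ((H12blk p Hk (m+1))ᴴ * (Hmat p Hk (m+1))⁻¹)))) := by
          have h5 : P2 p (m+1+1) * ((Hmat p Hk (m+1+1))⁻¹ * Emat p (m+1))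
              = (P2 p (m+1+1) * ((Hmat p Hk (m+1+1))⁻¹ *
                  (Emat p (m+1) * Hmat p Hk (m+1)))) * (Hmat p Hk (m+1))⁻¹ := by
            calc P2 p (m+1+1) * ((Hmat p Hk (m+1+1))⁻¹ * Emat p (m+1))
                = P2 p (m+1+1) * ((Hmat p Hk (m+1+1))⁻¹ * (Emat p (m+1) *
                    (1 : Matrix (Fin (m+1) × Fin p) (Fin (m+1) × Fin p) ℂ))) := by
                  rw [Matrix.mul_one]
              _ = P2 p (m+1+1) * ((Hmat p Hk (m+1+1))⁻¹ *
                    (Emat p (m+1) * (Hmat p Hk (m+1) * (Hmat p Hk (m+1))⁻¹))) := by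
                  rw [hHS]
              _ = _ := by simp only [Matrix.mul_assoc]
          rw [h5, hXHm]
          simp only [Matrix.neg_mul, Matrix.mul_assoc]
        have hfin : (P2 p (m+1+1) * ((Hmat p Hk (m+1+1))⁻¹ * (P2 p (m+1+1))ᴴ)) *
            (Hk (2 * (m+1)) - (H12blk p Hk (m+1))ᴴ * (Hmat p Hk (m+1))⁻¹ *
              H12blk p Hk (m+1)) = 1 := by
          rw [Matrix.mul_sub]
          have h6 : (P2 p (m+1+1) * ((Hmat p Hk (m+1+1))⁻¹ * (P2 p (m+1+1))ᴴ)) *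
              ((H12blk p Hk (m+1))ᴴ * (Hmat p Hk (m+1))⁻¹ * H12blk p Hk (m+1))
              = -(P2 p (m+1+1) * ((Hmat p Hk (m+1+1))⁻¹ *
                  (Emat p (m+1) * H12blk p Hk (m+1)))) := by
            have h7 : P2 p (m+1+1) * ((Hmat p Hk (m+1+1))⁻¹ *
                (Emat p (m+1) * H12blk p Hk (m+1)))
                = (P2 p (m+1+1) * ((Hmat p Hk (m+1+1))⁻¹ * Emat p (m+1))) *
                    H12blk p Hk (m+1) := by
              simp only [Matrix.mul_assoc]
            rw [h7, hX]
            simp only [Matrix.neg_mul, neg_neg, Matrix.mul_assoc]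
          rw [h6, sub_neg_eq_add, add_comm]
          have h8 : (P2 p (m+1+1) * ((Hmat p Hk (m+1+1))⁻¹ * (P2 p (m+1+1))ᴴ)) *
              Hk (2 * (m+1))
              = P2 p (m+1+1) * ((Hmat p Hk (m+1+1))⁻¹ *
                  ((P2 p (m+1+1))ᴴ * Hk (2 * (m+1)))) := by
            simp only [Matrix.mul_assoc]
          rw [h8]
          exact hone2
        exact (Matrix.inv_eq_left_inv hfin).symm
end
end

section
/- Suppose ω_{r-1}, ω_r, ω̃_r ∈ C^{p×2p} satisfy: ω_r J ω_r* = 0, ω̃_r J ω̃_r* = 0, ω̃_r J ω_r* = 0, and i ω_r J ω_{r-1}* = i ω̃_r J ω_{r-1}* = t with t ∈ C^{p×p} invertible, where J = [[0,I_p],[I_p,0]]. Then the 2p×2p matrix K := [ω_r J; -i ω_{r-1} J] satisfies K J K* = [[0,t],[t*,0]], K is invertible, K ω_r* = K ω̃_r* = [0; t], and consequently ω̃_r = ω_r. -/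
open Matrix
open scoped ComplexOrder

noncomputable section

lemma Jmat_herm (p : ℕ) : (Jmat p)ᴴ = Jmat p := by
  simp [Jmat, fromBlocks_conjTranspose]

lemma Jmat_mul_self (p : ℕ) : Jmat p * Jmat p = 1 := by
  simp [Jmat, fromBlocks_multiply, ← fromBlocks_one]

/-- uniqueness of the last Verblunsky-type coefficient. With
K = [ω_r J; -i ω_{r-1} J], one gets K J K* = [[0,t],[t*,0]], K invertible,
K ω_r* = K ω̃_r* = [0; t], and hence ω̃_r = ω_r. -/
theorem last_verblunsky_coefficient_unique (p : ℕ)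
    (ωprev ωr ωtil : Matrix (Fin p) (Fin p ⊕ Fin p) ℂ)
    (t : Matrix (Fin p) (Fin p) ℂ)
    (ht : IsUnit t.det) (hherm : tᴴ = t)
    (hprev : ωprev * Jmat p * ωprevᴴ = 0)
    (h1 : ωr * Jmat p * ωrᴴ = 0)
    (h2 : ωtil * Jmat p * ωtilᴴ = 0)
    (h3 : ωtil * Jmat p * ωrᴴ = 0)
    (h4 : Complex.I • (ωr * Jmat p * ωprevᴴ) = t)
    (h5 : Complex.I • (ωtil * Jmat p * ωprevᴴ) = t) :
    Matrix.fromRows (ωr * Jmat p) ((-Complex.I) • (ωprev * Jmat p)) * Jmat p *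
        (Matrix.fromRows (ωr * Jmat p) ((-Complex.I) • (ωprev * Jmat p)))ᴴ =
      Matrix.fromBlocks 0 t tᴴ 0 ∧
    IsUnit (Matrix.fromRows (ωr * Jmat p) ((-Complex.I) • (ωprev * Jmat p))).det ∧
    Matrix.fromRows (ωr * Jmat p) ((-Complex.I) • (ωprev * Jmat p)) * ωrᴴ =
      Matrix.fromRows (0 : Matrix (Fin p) (Fin p) ℂ) t ∧
    Matrix.fromRows (ωr * Jmat p) ((-Complex.I) • (ωprev * Jmat p)) * ωtilᴴ =
      Matrix.fromRows (0 : Matrix (Fin p) (Fin p) ℂ) t ∧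
    ωtil = ωr := by
  set J := Jmat p with hJ
  set K := Matrix.fromRows (ωr * J) ((-Complex.I) • (ωprev * J)) with hK
  -- useful facts
  have hJh : Jᴴ = J := Jmat_herm p
  have hJJ : J * J = 1 := Jmat_mul_self p
  -- ωprev J ωrᴴ from h4
  have h4' : (-Complex.I) • (ωprev * J * ωrᴴ) = tᴴ := by
    rw [← h4]
    rw [Matrix.conjTranspose_smul, Matrix.conjTranspose_mul, Matrix.conjTranspose_mul,
      Matrix.conjTranspose_conjTranspose, hJh]
    simp [Matrix.mul_assoc]
  have h5' : (-Complex.I) • (ωprev * J * ωtilᴴ) = tᴴ := by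
    rw [← h5]
    rw [Matrix.conjTranspose_smul, Matrix.conjTranspose_mul, Matrix.conjTranspose_mul,
      Matrix.conjTranspose_conjTranspose, hJh]
    simp [Matrix.mul_assoc]
  have h3' : ωr * J * ωtilᴴ = 0 := by
    have := congrArg Matrix.conjTranspose h3
    rwa [Matrix.conjTranspose_mul, Matrix.conjTranspose_mul,
      Matrix.conjTranspose_conjTranspose, hJh, Matrix.conjTranspose_zero,
      ← Matrix.mul_assoc] at this
  -- first conjunct
  have hstar : star (-Complex.I) = Complex.I := by simp
  have hKJK : K * J * Kᴴ = Matrix.fromBlocks 0 t tᴴ 0 := by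
    rw [hK, Matrix.fromRows_mul,
      conjTranspose_fromRows_eq_fromCols_conjTranspose,
      Matrix.fromRows_mul_fromCols, Matrix.fromBlocks_inj]
    refine ⟨?_, ?_, ?_, ?_⟩
    · rw [Matrix.conjTranspose_mul, hJh, Matrix.mul_assoc ωr J J, hJJ, Matrix.mul_one,
        ← Matrix.mul_assoc]
      exact h1
    · rw [Matrix.mul_assoc ωr J J, hJJ, Matrix.mul_one, Matrix.conjTranspose_smul,
        Matrix.conjTranspose_mul, hJh, hstar, Matrix.mul_smul, ← Matrix.mul_assoc]
      exact h4
    · rw [Matrix.smul_mul, Matrix.smul_mul, Matrix.mul_assoc ωprev J J, hJJ, Matrix.mul_one,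
        Matrix.conjTranspose_mul, hJh, ← Matrix.mul_assoc]
      exact h4'
    · rw [Matrix.conjTranspose_smul, Matrix.conjTranspose_mul, hJh, hstar,
        Matrix.smul_mul, Matrix.smul_mul, Matrix.mul_smul, smul_smul,
        Matrix.mul_assoc ωprev J J, hJJ, Matrix.mul_one, ← Matrix.mul_assoc, hprev, smul_zero]
  -- K ωrᴴ and K ωtilᴴ
  have hKr : K * ωrᴴ = Matrix.fromRows (0 : Matrix (Fin p) (Fin p) ℂ) t := by
    rw [hK, Matrix.fromRows_mul, Matrix.fromRows_inj.eq_iff]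
    refine ⟨?_, ?_⟩
    · exact h1
    · rw [Matrix.smul_mul]
      rw [h4', hherm]
  have hKt : K * ωtilᴴ = Matrix.fromRows (0 : Matrix (Fin p) (Fin p) ℂ) t := by
    rw [hK, Matrix.fromRows_mul, Matrix.fromRows_inj.eq_iff]
    refine ⟨?_, ?_⟩
    · exact h3'
    · rw [Matrix.smul_mul]
      rw [h5', hherm]
  -- invertibility
  have htu : IsUnit (Matrix.fromBlocks (0 : Matrix (Fin p) (Fin p) ℂ) t tᴴ 0).det := by
    rw [hherm]
    refine Matrix.isUnit_det_of_right_inverse (B := Matrix.fromBlocks 0 t⁻¹ t⁻¹ 0) ?_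
    rw [Matrix.fromBlocks_multiply, ← Matrix.fromBlocks_one]
    simp [Matrix.mul_nonsing_inv t ht]
  have hKu : IsUnit K.det := by
    have := htu
    rw [← hKJK, Matrix.det_mul, Matrix.det_mul] at this
    exact isUnit_of_mul_isUnit_left (isUnit_of_mul_isUnit_left this)
  -- conclude
  refine ⟨hKJK, hKu, hKr, hKt, ?_⟩
  have : ωtilᴴ = ωrᴴ := by
    have h := hKt.trans hKr.symm
    calc ωtilᴴ = K⁻¹ * (K * ωtilᴴ) := by
          rw [← Matrix.mul_assoc, Matrix.nonsing_inv_mul K hKu, Matrix.one_mul]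
      _ = K⁻¹ * (K * ωrᴴ) := by rw [h]
      _ = ωrᴴ := by rw [← Matrix.mul_assoc, Matrix.nonsing_inv_mul K hKu, Matrix.one_mul]
  have := congrArg Matrix.conjTranspose this
  simpa using this
end
end
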